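/- arXiv:2110.13789 — 11 statements merged into one kernel-verified Lean document; each statement's English description precedes it below -/
import Mathlib

section
/- For every integer n ≥ 1 and all reals k₁ < k₂ < k₃, the Y soliton parameters satisfy the modified Rankine–Hugoniot jump condition for the n-th modulation conservation law: h(a₂,q₂) − h(a₁,q₁) − h(a₃,q₃) = (2/3)(k₁+k₂+k₃) · ( f(a₂,q₂) − f(a₁,q₁) − f(a₃,q₃) ). -/
/-- Coefficients `c_i` of the `n`-th modulation conservation-law density:
`c_i = (3i/((n−i)(2n)(2n−1)))·C(2n,2i+1)` for `i = 1,…,n−1` and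
`c_n = 3/((2n+1)(2n−1))`. -/
noncomputable def cCoef (n i : ℕ) : ℝ :=
  if i = n then 3 / ((2 * (n : ℝ) + 1) * (2 * (n : ℝ) - 1))
  else (3 * (i : ℝ) / (((n : ℝ) - (i : ℝ)) * (2 * (n : ℝ)) * (2 * (n : ℝ) - 1))) *
    (Nat.choose (2 * n) (2 * i + 1) : ℝ)

/-- Coefficients `d_i = (2 − 4(i−1)/(3(2i−2n−1)))·c_i` of the `n`-th flux. -/
noncomputable def dCoef (n i : ℕ) : ℝ :=
  (2 - 4 * ((i : ℝ) - 1) / (3 * (2 * (i : ℝ) - 2 * (n : ℝ) - 1))) * cCoef n i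

/-- The density `f(a,q) = Σ_{i=1}^n c_i a^{i+1/2} q^{2(n−i)}`. -/
noncomputable def fDen (n : ℕ) (a q : ℝ) : ℝ :=
  ∑ i ∈ Finset.Icc 1 n, cCoef n i * (a ^ i * Real.sqrt a) * q ^ (2 * (n - i))

/-- The flux `h(a,q) = Σ_{i=1}^n d_i a^{i+1/2} q^{2(n−i)+1}`. -/
noncomputable def hFlux (n : ℕ) (a q : ℝ) : ℝ :=
  ∑ i ∈ Finset.Icc 1 n, dCoef n i * (a ^ i * Real.sqrt a) * q ^ (2 * (n - i) + 1)

lemma sum_odd (m : ℕ) (g : ℕ → ℝ) (h0 : ∀ k, Even k → g k = 0)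
    (h1 : ∀ k, m < k → g k = 0) :
    ∑ k ∈ Finset.range (m + 1), g k = ∑ i ∈ Finset.range m, g (2 * i + 1) := by
  have e1 : ∑ k ∈ Finset.range (m + 1), g k = ∑ k ∈ Finset.range (2 * m + 1), g k := by
    refine Finset.sum_subset (by intro x hx; simp only [Finset.mem_range] at *; omega) ?_
    intro x hx hnx
    simp only [Finset.mem_range] at hx hnx
    exact h1 x (by omega)
  have e2 : ∑ i ∈ Finset.range m, g (2 * i + 1)
      = ∑ k ∈ (Finset.range m).image (fun i => 2 * i + 1), g k :=
    (Finset.sum_image (by intro a _ b _ hab; simp only at hab; omega)).symm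
  rw [e1, e2]
  refine (Finset.sum_subset ?_ ?_).symm
  · intro x hx
    simp only [Finset.mem_image, Finset.mem_range] at hx ⊢
    obtain ⟨i, hi, rfl⟩ := hx; omega
  · intro x hx hnx
    simp only [Finset.mem_image, Finset.mem_range] at hx hnx
    rcases Nat.even_or_odd x with he | ho
    · exact h0 x he
    · obtain ⟨j, hj⟩ := ho
      exact absurd ⟨j, by omega, by omega⟩ hnx

lemma binom_odd (m : ℕ) (u v : ℝ) :
    (v + u) ^ m - (v - u) ^ m
      = ∑ i ∈ Finset.range m,
          2 * (Nat.choose m (2 * i + 1) : ℝ) * u ^ (2 * i + 1) * v ^ (m - (2 * i + 1)) := by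
  have h1 : (v + u) ^ m = ∑ k ∈ Finset.range (m + 1),
      u ^ k * v ^ (m - k) * (Nat.choose m k : ℝ) := by
    rw [add_comm v u]; exact add_pow u v m
  have h2 : (v - u) ^ m = ∑ k ∈ Finset.range (m + 1),
      (-u) ^ k * v ^ (m - k) * (Nat.choose m k : ℝ) := by
    rw [sub_eq_add_neg, add_comm]; exact add_pow (-u) v m
  rw [h1, h2, ← Finset.sum_sub_distrib,
    sum_odd m (fun k => u ^ k * v ^ (m - k) * (Nat.choose m k : ℝ)
      - (-u) ^ k * v ^ (m - k) * (Nat.choose m k : ℝ))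
      (fun k hk => by
        show u ^ k * v ^ (m - k) * _ - (-u) ^ k * v ^ (m - k) * _ = 0
        rw [hk.neg_pow]; ring)
      (fun k hk => by
        show u ^ k * v ^ (m - k) * _ - (-u) ^ k * v ^ (m - k) * _ = 0
        rw [Nat.choose_eq_zero_of_lt hk]; push_cast; ring)]
  refine Finset.sum_congr rfl fun i _ => ?_
  rw [Odd.neg_pow ⟨i, by ring⟩]
  ring

lemma choose_rel₁ (n i : ℕ) (hi : i < n) :
    (Nat.choose (2 * n + 1) (2 * i + 1) : ℝ) * (2 * (n : ℝ) - 2 * i)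
      = (Nat.choose (2 * n) (2 * i + 1) : ℝ) * (2 * (n : ℝ) + 1) := by
  have h := Nat.choose_mul_succ_eq (2 * n) (2 * i + 1)
  have h2 : 2 * n + 1 - (2 * i + 1) = 2 * (n - i) := by omega
  rw [h2] at h
  have h3 := congrArg (fun t : ℕ => (t : ℝ)) h
  push_cast [Nat.cast_sub hi.le] at h3
  linarith

lemma choose_rel₂ (n i : ℕ) (hi : i ≤ n) :
    (Nat.choose (2 * n + 2) (2 * i + 1) : ℝ) * (2 * (n : ℝ) - 2 * i + 1)
      = (Nat.choose (2 * n + 1) (2 * i + 1) : ℝ) * (2 * (n : ℝ) + 2) := by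
  have h := Nat.choose_mul_succ_eq (2 * n + 1) (2 * i + 1)
  have h2 : 2 * n + 1 + 1 - (2 * i + 1) = 2 * (n - i) + 1 := by omega
  rw [h2] at h
  have h3 := congrArg (fun t : ℕ => (t : ℝ)) h
  push_cast [Nat.cast_sub hi] at h3
  have h4 : (2 * n + 1 + 1 : ℕ) = 2 * n + 2 := by omega
  rw [h4] at h3
  linarith

lemma sumF (n : ℕ) (hn : 1 ≤ n) (u v : ℝ) :
    ∑ i ∈ Finset.Icc 1 n, cCoef n i * u ^ (2 * i + 1) * v ^ (2 * (n - i))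
    = 3 / (2 * (2 * (n : ℝ) + 1) * (2 * (n : ℝ) - 1)) *
        ((v + u) ^ (2 * n + 1) - (v - u) ^ (2 * n + 1))
      - 3 / (4 * (n : ℝ) * (2 * (n : ℝ) - 1)) *
        (v * ((v + u) ^ (2 * n) - (v - u) ^ (2 * n))) := by
  have hN : (1 : ℝ) ≤ (n : ℝ) := by exact_mod_cast hn
  have hd1 : 2 * (n : ℝ) - 1 ≠ 0 := by linarith
  have hd2 : 2 * (n : ℝ) + 1 ≠ 0 := by linarith
  have hd3 : (n : ℝ) ≠ 0 := by linarith
  have hL : ∑ i ∈ Finset.Icc 1 n, cCoef n i * u ^ (2 * i + 1) * v ^ (2 * (n - i))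
      = ∑ i ∈ Finset.range (n + 1), cCoef n i * u ^ (2 * i + 1) * v ^ (2 * (n - i)) := by
    have hset : Finset.range (n + 1) = insert 0 (Finset.Icc 1 n) := by
      ext x; simp only [Finset.mem_range, Finset.mem_insert, Finset.mem_Icc]; omega
    rw [hset, Finset.sum_insert (by simp)]
    have hc0 : cCoef n 0 = 0 := by
      unfold cCoef; rw [if_neg (by omega)]; simp
    rw [hc0]; ring
  rw [hL, binom_odd, binom_odd]
  have hs1 : ∑ i ∈ Finset.range (2 * n + 1),
        2 * ((Nat.choose (2 * n + 1) (2 * i + 1) : ℝ)) * u ^ (2 * i + 1) * v ^ (2 * n + 1 - (2 * i + 1))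
      = ∑ i ∈ Finset.range (n + 1),
        2 * ((Nat.choose (2 * n + 1) (2 * i + 1) : ℝ)) * u ^ (2 * i + 1) * v ^ (2 * n + 1 - (2 * i + 1)) := by
    refine (Finset.sum_subset (by intro x hx; simp only [Finset.mem_range] at *; omega) ?_).symm
    intro x hx hnx
    simp only [Finset.mem_range] at hx hnx
    rw [Nat.choose_eq_zero_of_lt (by omega)]
    push_cast; ring
  have hs2 : ∑ i ∈ Finset.range (2 * n),
        2 * ((Nat.choose (2 * n) (2 * i + 1) : ℝ)) * u ^ (2 * i + 1) * v ^ (2 * n - (2 * i + 1))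
      = ∑ i ∈ Finset.range (n + 1),
        2 * ((Nat.choose (2 * n) (2 * i + 1) : ℝ)) * u ^ (2 * i + 1) * v ^ (2 * n - (2 * i + 1)) := by
    refine (Finset.sum_subset (by intro x hx; simp only [Finset.mem_range] at *; omega) ?_).symm
    intro x hx hnx
    simp only [Finset.mem_range] at hx hnx
    rw [Nat.choose_eq_zero_of_lt (by omega)]
    push_cast; ring
  rw [hs1, hs2, Finset.mul_sum, Finset.mul_sum, Finset.mul_sum, ← Finset.sum_sub_distrib]
  refine Finset.sum_congr rfl fun i hi => ?_
  simp only [Finset.mem_range] at hi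
  rcases eq_or_lt_of_le (Nat.lt_succ_iff.mp hi) with heq | hlt
  · subst heq
    unfold cCoef
    rw [if_pos rfl, Nat.choose_self, Nat.choose_eq_zero_of_lt (by omega),
      show 2 * i + 1 - (2 * i + 1) = 0 from by omega,
      show 2 * i - (2 * i + 1) = 0 from by omega,
      show 2 * (i - i) = 0 from by omega]
    have key : 3 / ((2 * (i : ℝ) + 1) * (2 * (i : ℝ) - 1))
        = 3 / (2 * (2 * (i : ℝ) + 1) * (2 * (i : ℝ) - 1)) * 2 := by
      field_simp
    push_cast
    linear_combination u ^ (2 * i + 1) * key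
  · obtain ⟨j, rfl⟩ : ∃ j, n = i + j + 1 := ⟨n - i - 1, by omega⟩
    unfold cCoef
    rw [if_neg (by omega),
      show 2 * (i + j + 1) + 1 - (2 * i + 1) = 2 * (j + 1) from by omega,
      show 2 * (i + j + 1) - (2 * i + 1) = 2 * j + 1 from by omega,
      show 2 * ((i + j + 1) - i) = 2 * (j + 1) from by omega]
    have hrel := choose_rel₁ (i + j + 1) i (by omega)
    have hI : (0 : ℝ) ≤ (i : ℝ) := Nat.cast_nonneg i
    have hJ0 : (0 : ℝ) ≤ (j : ℝ) := Nat.cast_nonneg j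
    have hC1 : (Nat.choose (2 * (i + j + 1) + 1) (2 * i + 1) : ℝ)
        = (Nat.choose (2 * (i + j + 1)) (2 * i + 1) : ℝ) *
            (2 * ((i : ℝ) + (j : ℝ) + 1) + 1) / (2 * (j : ℝ) + 2) := by
      rw [eq_div_iff (by linarith)]
      push_cast at hrel ⊢
      linarith
    have d1 : ((i : ℝ) + (j : ℝ) + 1) - (i : ℝ) ≠ 0 := by intro h; linarith
    have d2 : 2 * ((i : ℝ) + (j : ℝ) + 1) ≠ 0 := by intro h; linarith
    have d3 : 2 * ((i : ℝ) + (j : ℝ) + 1) - 1 ≠ 0 := by intro h; linarith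
    have d4 : 2 * ((i : ℝ) + (j : ℝ) + 1) + 1 ≠ 0 := by intro h; linarith
    have d5 : (2 : ℝ) * (j : ℝ) + 2 ≠ 0 := by intro h; linarith
    have key : (3 * (i : ℝ) / (((((i : ℝ) + (j : ℝ) + 1)) - (i : ℝ)) * (2 * ((i : ℝ) + (j : ℝ) + 1)) *
            (2 * ((i : ℝ) + (j : ℝ) + 1) - 1))) * (Nat.choose (2 * (i + j + 1)) (2 * i + 1) : ℝ)
        = 3 / (2 * (2 * ((i : ℝ) + (j : ℝ) + 1) + 1) * (2 * ((i : ℝ) + (j : ℝ) + 1) - 1)) *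
            (2 * (Nat.choose (2 * (i + j + 1) + 1) (2 * i + 1) : ℝ))
          - 3 / (4 * ((i : ℝ) + (j : ℝ) + 1) * (2 * ((i : ℝ) + (j : ℝ) + 1) - 1)) *
            (2 * (Nat.choose (2 * (i + j + 1)) (2 * i + 1) : ℝ)) := by
      rw [hC1]
      field_simp
      ring
    push_cast
    linear_combination (u ^ (2 * i + 1) * v ^ (2 * (j + 1))) * key

lemma sumH (n : ℕ) (hn : 1 ≤ n) (u v : ℝ) :
    ∑ i ∈ Finset.Icc 1 n, dCoef n i * u ^ (2 * i + 1) * v ^ (2 * (n - i) + 1)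
    = 1 / (4 * (n : ℝ) * ((n : ℝ) + 1)) *
        ((v + u) ^ (2 * n + 2) - (v - u) ^ (2 * n + 2))
      + 1 / (2 * (n : ℝ) * (2 * (n : ℝ) - 1)) *
        (v * ((v + u) ^ (2 * n + 1) - (v - u) ^ (2 * n + 1)))
      - 1 / ((n : ℝ) * (2 * (n : ℝ) - 1)) *
        (v ^ 2 * ((v + u) ^ (2 * n) - (v - u) ^ (2 * n))) := by
  have hN : (1 : ℝ) ≤ (n : ℝ) := by exact_mod_cast hn
  have hd1 : 2 * (n : ℝ) - 1 ≠ 0 := by intro h; linarith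
  have hd2 : 2 * (n : ℝ) + 1 ≠ 0 := by intro h; linarith
  have hd3 : (n : ℝ) ≠ 0 := by intro h; linarith
  have hd4 : (n : ℝ) + 1 ≠ 0 := by intro h; linarith
  have hL : ∑ i ∈ Finset.Icc 1 n, dCoef n i * u ^ (2 * i + 1) * v ^ (2 * (n - i) + 1)
      = ∑ i ∈ Finset.range (n + 1), dCoef n i * u ^ (2 * i + 1) * v ^ (2 * (n - i) + 1) := by
    have hset : Finset.range (n + 1) = insert 0 (Finset.Icc 1 n) := by
      ext x; simp only [Finset.mem_range, Finset.mem_insert, Finset.mem_Icc]; omega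
    rw [hset, Finset.sum_insert (by simp)]
    have hc0 : dCoef n 0 = 0 := by
      unfold dCoef cCoef; rw [if_neg (by omega)]; simp
    rw [hc0]; ring
  rw [hL, binom_odd, binom_odd, binom_odd]
  have hs0 : ∑ i ∈ Finset.range (2 * n + 2),
        2 * ((Nat.choose (2 * n + 2) (2 * i + 1) : ℝ)) * u ^ (2 * i + 1) * v ^ (2 * n + 2 - (2 * i + 1))
      = ∑ i ∈ Finset.range (n + 1),
        2 * ((Nat.choose (2 * n + 2) (2 * i + 1) : ℝ)) * u ^ (2 * i + 1) * v ^ (2 * n + 2 - (2 * i + 1)) := by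
    refine (Finset.sum_subset (by intro x hx; simp only [Finset.mem_range] at *; omega) ?_).symm
    intro x hx hnx
    simp only [Finset.mem_range] at hx hnx
    rw [Nat.choose_eq_zero_of_lt (by omega)]
    push_cast; ring
  have hs1 : ∑ i ∈ Finset.range (2 * n + 1),
        2 * ((Nat.choose (2 * n + 1) (2 * i + 1) : ℝ)) * u ^ (2 * i + 1) * v ^ (2 * n + 1 - (2 * i + 1))
      = ∑ i ∈ Finset.range (n + 1),
        2 * ((Nat.choose (2 * n + 1) (2 * i + 1) : ℝ)) * u ^ (2 * i + 1) * v ^ (2 * n + 1 - (2 * i + 1)) := by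
    refine (Finset.sum_subset (by intro x hx; simp only [Finset.mem_range] at *; omega) ?_).symm
    intro x hx hnx
    simp only [Finset.mem_range] at hx hnx
    rw [Nat.choose_eq_zero_of_lt (by omega)]
    push_cast; ring
  have hs2 : ∑ i ∈ Finset.range (2 * n),
        2 * ((Nat.choose (2 * n) (2 * i + 1) : ℝ)) * u ^ (2 * i + 1) * v ^ (2 * n - (2 * i + 1))
      = ∑ i ∈ Finset.range (n + 1),
        2 * ((Nat.choose (2 * n) (2 * i + 1) : ℝ)) * u ^ (2 * i + 1) * v ^ (2 * n - (2 * i + 1)) := by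
    refine (Finset.sum_subset (by intro x hx; simp only [Finset.mem_range] at *; omega) ?_).symm
    intro x hx hnx
    simp only [Finset.mem_range] at hx hnx
    rw [Nat.choose_eq_zero_of_lt (by omega)]
    push_cast; ring
  rw [hs0, hs1, hs2, Finset.mul_sum, Finset.mul_sum, Finset.mul_sum, Finset.mul_sum,
    Finset.mul_sum, ← Finset.sum_add_distrib, ← Finset.sum_sub_distrib]
  refine Finset.sum_congr rfl fun i hi => ?_
  simp only [Finset.mem_range] at hi
  rcases eq_or_lt_of_le (Nat.lt_succ_iff.mp hi) with heq | hlt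
  · subst heq
    unfold dCoef cCoef
    rw [if_pos rfl,
      show (2 * i + 2).choose (2 * i + 1) = (2 * i + 1) + 1 from by
        rw [show 2 * i + 2 = (2 * i + 1) + 1 from by omega, Nat.choose_succ_self_right],
      Nat.choose_self, Nat.choose_eq_zero_of_lt (by omega),
      show 2 * i + 2 - (2 * i + 1) = 1 from by omega,
      show 2 * i + 1 - (2 * i + 1) = 0 from by omega,
      show 2 * i - (2 * i + 1) = 0 from by omega,
      show 2 * (i - i) + 1 = 1 from by omega]
    have hdd : 2 * (i : ℝ) - 2 * (i : ℝ) - 1 ≠ 0 := by intro h; linarith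
    have key : (2 - 4 * ((i : ℝ) - 1) / (3 * (2 * (i : ℝ) - 2 * (i : ℝ) - 1))) *
          (3 / ((2 * (i : ℝ) + 1) * (2 * (i : ℝ) - 1)))
        = 1 / (4 * (i : ℝ) * ((i : ℝ) + 1)) * (2 * (2 * (i : ℝ) + 1 + 1))
          + 1 / (2 * (i : ℝ) * (2 * (i : ℝ) - 1)) * 2 := by
      field_simp
      ring
    push_cast
    linear_combination (u ^ (2 * i + 1) * v) * key
  · obtain ⟨j, rfl⟩ : ∃ j, n = i + j + 1 := ⟨n - i - 1, by omega⟩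
    unfold dCoef cCoef
    rw [if_neg (by omega),
      show 2 * (i + j + 1) + 2 - (2 * i + 1) = 2 * j + 3 from by omega,
      show 2 * (i + j + 1) + 1 - (2 * i + 1) = 2 * j + 2 from by omega,
      show 2 * (i + j + 1) - (2 * i + 1) = 2 * j + 1 from by omega,
      show 2 * ((i + j + 1) - i) + 1 = 2 * j + 3 from by omega]
    have hrel1 := choose_rel₁ (i + j + 1) i (by omega)
    have hrel2 := choose_rel₂ (i + j + 1) i (by omega)
    have hI : (0 : ℝ) ≤ (i : ℝ) := Nat.cast_nonneg i
    have hJ0 : (0 : ℝ) ≤ (j : ℝ) := Nat.cast_nonneg j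
    have hC1 : (Nat.choose (2 * (i + j + 1) + 1) (2 * i + 1) : ℝ)
        = (Nat.choose (2 * (i + j + 1)) (2 * i + 1) : ℝ) *
            (2 * ((i : ℝ) + (j : ℝ) + 1) + 1) / (2 * (j : ℝ) + 2) := by
      rw [eq_div_iff (by linarith)]
      push_cast at hrel1 ⊢
      linarith
    have hC2 : (Nat.choose (2 * (i + j + 1) + 2) (2 * i + 1) : ℝ)
        = (Nat.choose (2 * (i + j + 1) + 1) (2 * i + 1) : ℝ) *
            (2 * ((i : ℝ) + (j : ℝ) + 1) + 2) / (2 * (j : ℝ) + 3) := by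
      rw [eq_div_iff (by linarith)]
      push_cast at hrel2 ⊢
      linarith
    have d1 : ((i : ℝ) + (j : ℝ) + 1) - (i : ℝ) ≠ 0 := by intro h; linarith
    have d2 : 2 * ((i : ℝ) + (j : ℝ) + 1) ≠ 0 := by intro h; linarith
    have d3 : 2 * ((i : ℝ) + (j : ℝ) + 1) - 1 ≠ 0 := by intro h; linarith
    have d4 : 2 * ((i : ℝ) + (j : ℝ) + 1) + 1 ≠ 0 := by intro h; linarith
    have d5 : (2 : ℝ) * (j : ℝ) + 2 ≠ 0 := by intro h; linarith
    have d6 : (2 : ℝ) * (j : ℝ) + 3 ≠ 0 := by intro h; linarith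
    have d7 : ((i : ℝ) + (j : ℝ) + 1) + 1 ≠ 0 := by intro h; linarith
    have d8 : 2 * (i : ℝ) - 2 * ((i : ℝ) + (j : ℝ) + 1) - 1 ≠ 0 := by intro h; linarith
    have key : (2 - 4 * ((i : ℝ) - 1) / (3 * (2 * (i : ℝ) - 2 * ((i : ℝ) + (j : ℝ) + 1) - 1))) *
          ((3 * (i : ℝ) / (((((i : ℝ) + (j : ℝ) + 1)) - (i : ℝ)) * (2 * ((i : ℝ) + (j : ℝ) + 1)) *
            (2 * ((i : ℝ) + (j : ℝ) + 1) - 1))) * (Nat.choose (2 * (i + j + 1)) (2 * i + 1) : ℝ))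
        = 1 / (4 * ((i : ℝ) + (j : ℝ) + 1) * (((i : ℝ) + (j : ℝ) + 1) + 1)) *
            (2 * (Nat.choose (2 * (i + j + 1) + 2) (2 * i + 1) : ℝ))
          + 1 / (2 * ((i : ℝ) + (j : ℝ) + 1) * (2 * ((i : ℝ) + (j : ℝ) + 1) - 1)) *
            (2 * (Nat.choose (2 * (i + j + 1) + 1) (2 * i + 1) : ℝ))
          - 1 / (((i : ℝ) + (j : ℝ) + 1) * (2 * ((i : ℝ) + (j : ℝ) + 1) - 1)) *
            (2 * (Nat.choose (2 * (i + j + 1)) (2 * i + 1) : ℝ)) := by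
      rw [hC2, hC1]
      rw [show 2 * (i : ℝ) - 2 * ((i : ℝ) + (j : ℝ) + 1) - 1 = -(2 * (j : ℝ) + 3) from by ring]
      field_simp
      ring
    push_cast
    linear_combination (u ^ (2 * i + 1) * v ^ (2 * j + 3)) * key

lemma fDen_eq (n : ℕ) (hn : 1 ≤ n) (x y : ℝ) (hxy : x ≤ y) :
    fDen n ((y - x) ^ 2 / 4) ((x + y) / 2)
      = 3 / (2 * (2 * (n : ℝ) + 1) * (2 * (n : ℝ) - 1)) *
          (y ^ (2 * n) * y - x ^ (2 * n) * x)
        - 3 / (4 * (n : ℝ) * (2 * (n : ℝ) - 1)) *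
          (((x + y) / 2) * (y ^ (2 * n) - x ^ (2 * n))) := by
  have hw : (0 : ℝ) ≤ (y - x) / 2 := by linarith
  have ha : (y - x) ^ 2 / 4 = ((y - x) / 2) ^ 2 := by ring
  unfold fDen
  rw [ha, Real.sqrt_sq hw]
  have hmono : ∀ i : ℕ, (((y - x) / 2) ^ 2) ^ i * ((y - x) / 2)
      = ((y - x) / 2) ^ (2 * i + 1) := fun i => by
    rw [← pow_mul, ← pow_succ]
  simp_rw [hmono]
  rw [sumF n hn ((y - x) / 2) ((x + y) / 2),
    show (x + y) / 2 + (y - x) / 2 = y from by ring,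
    show (x + y) / 2 - (y - x) / 2 = x from by ring,
    pow_succ, pow_succ]

lemma hFlux_eq (n : ℕ) (hn : 1 ≤ n) (x y : ℝ) (hxy : x ≤ y) :
    hFlux n ((y - x) ^ 2 / 4) ((x + y) / 2)
      = 1 / (4 * (n : ℝ) * ((n : ℝ) + 1)) *
          (y ^ (2 * n) * y * y - x ^ (2 * n) * x * x)
        + 1 / (2 * (n : ℝ) * (2 * (n : ℝ) - 1)) *
          (((x + y) / 2) * (y ^ (2 * n) * y - x ^ (2 * n) * x))
        - 1 / ((n : ℝ) * (2 * (n : ℝ) - 1)) *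
          (((x + y) / 2) ^ 2 * (y ^ (2 * n) - x ^ (2 * n))) := by
  have hw : (0 : ℝ) ≤ (y - x) / 2 := by linarith
  have ha : (y - x) ^ 2 / 4 = ((y - x) / 2) ^ 2 := by ring
  unfold hFlux
  rw [ha, Real.sqrt_sq hw]
  have hmono : ∀ i : ℕ, (((y - x) / 2) ^ 2) ^ i * ((y - x) / 2)
      = ((y - x) / 2) ^ (2 * i + 1) := fun i => by
    rw [← pow_mul, ← pow_succ]
  simp_rw [hmono]
  rw [sumH n hn ((y - x) / 2) ((x + y) / 2),
    show (x + y) / 2 + (y - x) / 2 = y from by ring,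
    show (x + y) / 2 - (y - x) / 2 = x from by ring,
    show 2 * n + 2 = (2 * n + 1) + 1 from by omega,
    pow_succ, pow_succ, pow_succ, pow_succ]

/-- For every `n ≥ 1` and all `k₁ < k₂ < k₃`, the Y soliton parameters
`qⱼ, aⱼ` satisfy the modified Rankine–Hugoniot jump condition
`h(a₂,q₂) − h(a₁,q₁) − h(a₃,q₃) = s_y (f(a₂,q₂) − f(a₁,q₁) − f(a₃,q₃))`
with `s_y = (2/3)(k₁+k₂+k₃)`. -/
theorem y_soliton_modified_RH_first_family (n : ℕ) (hn : 1 ≤ n)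
    (k₁ k₂ k₃ : ℝ) (h12 : k₁ < k₂) (h23 : k₂ < k₃) :
    hFlux n ((k₃ - k₁) ^ 2 / 4) ((k₁ + k₃) / 2)
      - hFlux n ((k₂ - k₁) ^ 2 / 4) ((k₁ + k₂) / 2)
      - hFlux n ((k₃ - k₂) ^ 2 / 4) ((k₂ + k₃) / 2)
    = (2 / 3) * (k₁ + k₂ + k₃) *
        (fDen n ((k₃ - k₁) ^ 2 / 4) ((k₁ + k₃) / 2)
          - fDen n ((k₂ - k₁) ^ 2 / 4) ((k₁ + k₂) / 2)
          - fDen n ((k₃ - k₂) ^ 2 / 4) ((k₂ + k₃) / 2)) := by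
  have h13 : k₁ < k₃ := lt_trans h12 h23
  rw [fDen_eq n hn k₁ k₃ h13.le, fDen_eq n hn k₁ k₂ h12.le, fDen_eq n hn k₂ k₃ h23.le,
    hFlux_eq n hn k₁ k₃ h13.le, hFlux_eq n hn k₁ k₂ h12.le, hFlux_eq n hn k₂ k₃ h23.le]
  have hN : (1 : ℝ) ≤ (n : ℝ) := by exact_mod_cast hn
  have hd1 : 2 * (n : ℝ) - 1 ≠ 0 := by intro h; linarith
  have hd2 : 2 * (n : ℝ) + 1 ≠ 0 := by intro h; linarith
  have hd3 : (n : ℝ) ≠ 0 := by intro h; linarith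
  have hd4 : (n : ℝ) + 1 ≠ 0 := by intro h; linarith
  generalize k₁ ^ (2 * n) = P₁
  generalize k₂ ^ (2 * n) = P₂
  generalize k₃ ^ (2 * n) = P₃
  field_simp
  ring
end

section
/- For every integer n ≥ 1 and all reals s, r, the polynomial identity Σ_{i=1}^n (c_i/2^{2n+1}) (s−r)^{2i+1} (s+r)^{2(n−i)} = (s^{2n+1} − r^{2n+1}) Σ_{i=1}^n c_i/2^{2n+1} + (r^{2n} s − r s^{2n}) Σ_{i=1}^n (c_i/2^{2n+1})(4i−2n+1) holds; in particular all monomials in which both s and r appear with exponent strictly between 1 and 2n cancel. -/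
lemma pair_sum (f : ℕ → ℝ) (m : ℕ) :
    ∑ j ∈ Finset.range (2*m), f j = ∑ i ∈ Finset.range m, (f (2*i) + f (2*i+1)) := by
  induction m with
  | zero => simp
  | succ m ih =>
    rw [show 2*(m+1) = (2*m+1)+1 by ring, Finset.sum_range_succ, Finset.sum_range_succ,
      Finset.sum_range_succ, ih]
    ring

lemma odd_expand (m : ℕ) (x q : ℝ) :
    (q+x)^(2*m+1) - (q-x)^(2*m+1)
      = ∑ i ∈ Finset.range (m+1),
          2*(Nat.choose (2*m+1) (2*i+1) : ℝ) * x^(2*i+1) * q^(2*(m-i)) := by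
  have h1 : (q+x)^(2*m+1)
      = ∑ j ∈ Finset.range (2*m+1+1), x^j * q^(2*m+1-j) * (Nat.choose (2*m+1) j : ℝ) := by
    rw [add_comm q x]; exact add_pow x q (2*m+1)
  have h2 : (q-x)^(2*m+1)
      = ∑ j ∈ Finset.range (2*m+1+1), (-x)^j * q^(2*m+1-j) * (Nat.choose (2*m+1) j : ℝ) := by
    rw [sub_eq_add_neg, add_comm q (-x)]; exact add_pow (-x) q (2*m+1)
  rw [h1, h2, ← Finset.sum_sub_distrib, show 2*m+1+1 = 2*(m+1) by ring, pair_sum]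
  refine Finset.sum_congr rfl fun i _ => ?_
  have hx : (-x)^(2*i) = x^(2*i) := by rw [pow_mul, pow_mul, neg_sq]
  have hx2 : (-x)^(2*i+1) = -(x^(2*i+1)) := by rw [pow_succ, pow_succ, hx]; ring
  have hq : 2*m+1 - (2*i+1) = 2*(m-i) := by omega
  rw [hx, hx2, hq]; ring

lemma even_expand (m : ℕ) (x q : ℝ) :
    (q+x)^(2*m) + (q-x)^(2*m)
      = ∑ i ∈ Finset.range (m+1),
          2*(Nat.choose (2*m) (2*i) : ℝ) * x^(2*i) * q^(2*(m-i)) := by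
  have h1 : (q+x)^(2*m)
      = ∑ j ∈ Finset.range (2*m+1), x^j * q^(2*m-j) * (Nat.choose (2*m) j : ℝ) := by
    rw [add_comm q x]; exact add_pow x q (2*m)
  have h2 : (q-x)^(2*m)
      = ∑ j ∈ Finset.range (2*m+1), (-x)^j * q^(2*m-j) * (Nat.choose (2*m) j : ℝ) := by
    rw [sub_eq_add_neg, add_comm q (-x)]; exact add_pow (-x) q (2*m)
  rw [h1, h2, ← Finset.sum_add_distrib, Finset.sum_range_succ, pair_sum,
    Finset.sum_range_succ]
  congr 1
  · refine Finset.sum_congr rfl fun i _ => ?_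
    have hx : (-x)^(2*i) = x^(2*i) := by rw [pow_mul, pow_mul, neg_sq]
    have hx2 : (-x)^(2*i+1) = -(x^(2*i+1)) := by rw [pow_succ, pow_succ, hx]; ring
    have hq : 2*m - (2*i) = 2*(m-i) := by omega
    rw [hx, hx2, hq]; ring
  · have hx : (-x)^(2*m) = x^(2*m) := by rw [pow_mul, pow_mul, neg_sq]
    rw [hx, Nat.choose_self, Nat.sub_self, Nat.sub_self]
    ring

lemma sum_odd_choose (m : ℕ) :
    ∑ i ∈ Finset.range (m+1), 2*(Nat.choose (2*m+1) (2*i+1) : ℝ) = 2^(2*m+1) := by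
  have h := odd_expand m 1 1
  simp only [one_pow, mul_one] at h
  norm_num at h
  rw [← h]

lemma sum_even_choose (m : ℕ) (hm : 1 ≤ m) :
    ∑ i ∈ Finset.range (m+1), 2*(Nat.choose (2*m) (2*i) : ℝ) = 2^(2*m) := by
  have h := even_expand m 1 1
  simp only [one_pow, mul_one] at h
  rw [show (1:ℝ)+1 = 2 by norm_num, show (1:ℝ)-1 = 0 by norm_num,
    zero_pow (by omega : 2*m ≠ 0), add_zero] at h
  rw [← h]

noncomputable def vCoef (n i : ℕ) : ℝ :=
  if i = 0 then 0 else 2 * (Nat.choose (2*n-1) (2*i-1) : ℝ)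

lemma sum_shift (n : ℕ) (g : ℕ → ℝ) :
    ∑ i ∈ Finset.range (n+1), vCoef n i * g i
      = ∑ i ∈ Finset.range n, 2*(Nat.choose (2*n-1) (2*i+1) : ℝ) * g (i+1) := by
  rw [Finset.sum_range_succ']
  simp only [vCoef]
  norm_num
  refine Finset.sum_congr rfl fun i _ => ?_
  rw [show 2*(i+1)-1 = 2*i+1 by omega]

lemma sum_drop (n : ℕ) (g : ℕ → ℝ) :
    ∑ i ∈ Finset.range (n+1), 2*(Nat.choose (2*n-1) (2*i+1) : ℝ) * g i
      = ∑ i ∈ Finset.range n, 2*(Nat.choose (2*n-1) (2*i+1) : ℝ) * g i := by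
  rw [Finset.sum_range_succ, Nat.choose_eq_zero_of_lt (by omega : 2*n-1 < 2*n+1)]
  norm_num

lemma key (n i : ℕ) (hn : 1 ≤ n) (hi : i ≤ n) :
    cCoef n i = 2*(3/(8*(n:ℝ)*(2*(n:ℝ)+1)))*(Nat.choose (2*n+1) (2*i+1) : ℝ)
      + (3/(8*(n:ℝ)*(2*(n:ℝ)-1)))*(vCoef n i - 2*(Nat.choose (2*n-1) (2*i+1) : ℝ)) := by
  have hn1 : (1:ℝ) ≤ (n:ℝ) := by exact_mod_cast hn
  have hne : (n:ℝ) ≠ 0 := by linarith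
  have hne1 : 2*(n:ℝ)+1 ≠ 0 := by linarith
  have hne2 : 2*(n:ℝ)-1 ≠ 0 := by linarith
  rcases eq_or_ne i 0 with rfl | h0
  · rw [cCoef, if_neg (by omega), vCoef, if_pos rfl]
    rw [show 2*0+1 = 1 by norm_num, Nat.choose_one_right, Nat.choose_one_right,
      Nat.choose_one_right, Nat.cast_sub (by omega : 1 ≤ 2*n)]
    push_cast
    field_simp
    have hne3 : -1 + (n:ℝ)*2 ≠ 0 := by linarith
    ring_nf
    field_simp
    ring
  · rcases eq_or_ne i n with rfl | hN
    · rw [cCoef, if_pos rfl, vCoef, if_neg (by omega), Nat.choose_self,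
        Nat.choose_eq_zero_of_lt (by omega : 2*i-1 < 2*i+1), Nat.choose_self]
      push_cast
      field_simp
      ring
    · obtain ⟨j, rfl⟩ : ∃ j, i = j + 1 := ⟨i-1, by omega⟩
      obtain ⟨m, rfl⟩ : ∃ m, n = j + m + 2 := ⟨n-j-2, by omega⟩
      rw [cCoef, if_neg hN, vCoef, if_neg h0]
      rw [show 2*(j+m+2)-1 = 2*j+2*m+3 by omega, show 2*(j+1)-1 = 2*j+1 by omega,
        show 2*(j+m+2)+1 = 2*j+2*m+5 by ring, show 2*(j+1)+1 = 2*j+3 by ring,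
        show 2*(j+m+2) = 2*j+2*m+4 by ring]
      have e0 : ((j+m+2 : ℕ) : ℝ) - ((j+1 : ℕ) : ℝ) = (m:ℝ)+1 := by push_cast; ring
      have e1 : 2*((j+m+2 : ℕ) : ℝ) - 1 = 2*(j:ℝ)+2*m+3 := by push_cast; ring
      have e2 : 2*((j+m+2 : ℕ) : ℝ) + 1 = 2*(j:ℝ)+2*m+5 := by push_cast; ring
      have e3 : 2*((j+m+2 : ℕ) : ℝ) = 2*(j:ℝ)+2*m+4 := by push_cast; ring
      have e4 : ((j+m+2 : ℕ) : ℝ) = (j:ℝ)+m+2 := by push_cast; ring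
      have e5 : ((j+1 : ℕ) : ℝ) = (j:ℝ)+1 := by push_cast; ring
      rw [e0, e1, e2, e3, e4, e5]
      -- Pascal identities, cast to ℝ
      have P3 : ((Nat.choose (2*j+2*m+5) (2*j+3) : ℕ) : ℝ)
          = (Nat.choose (2*j+2*m+4) (2*j+2) : ℝ) + (Nat.choose (2*j+2*m+4) (2*j+3) : ℝ) := by
        have h : Nat.choose (2*j+2*m+5) (2*j+3)
            = Nat.choose (2*j+2*m+4) (2*j+2) + Nat.choose (2*j+2*m+4) (2*j+3) := by
          rw [show 2*j+2*m+5 = (2*j+2*m+4)+1 by ring, show 2*j+3 = (2*j+2)+1 by ring]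
          exact Nat.choose_succ_succ _ _
        exact_mod_cast h
      have P1 : ((Nat.choose (2*j+2*m+4) (2*j+3) : ℕ) : ℝ)
          = (Nat.choose (2*j+2*m+3) (2*j+2) : ℝ) + (Nat.choose (2*j+2*m+3) (2*j+3) : ℝ) := by
        have h : Nat.choose (2*j+2*m+4) (2*j+3)
            = Nat.choose (2*j+2*m+3) (2*j+2) + Nat.choose (2*j+2*m+3) (2*j+3) := by
          rw [show 2*j+2*m+4 = (2*j+2*m+3)+1 by ring, show 2*j+3 = (2*j+2)+1 by ring]
          exact Nat.choose_succ_succ _ _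
        exact_mod_cast h
      have P2 : ((Nat.choose (2*j+2*m+4) (2*j+2) : ℕ) : ℝ)
          = (Nat.choose (2*j+2*m+3) (2*j+1) : ℝ) + (Nat.choose (2*j+2*m+3) (2*j+2) : ℝ) := by
        have h : Nat.choose (2*j+2*m+4) (2*j+2)
            = Nat.choose (2*j+2*m+3) (2*j+1) + Nat.choose (2*j+2*m+3) (2*j+2) := by
          rw [show 2*j+2*m+4 = (2*j+2*m+3)+1 by ring, show 2*j+2 = (2*j+1)+1 by ring]
          exact Nat.choose_succ_succ _ _
        exact_mod_cast h
      have h1 : ((Nat.choose (2*j+2*m+3) (2*j+2) : ℕ) : ℝ) * (2*(j:ℝ)+2)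
          = (Nat.choose (2*j+2*m+3) (2*j+1) : ℝ) * (2*(m:ℝ)+2) := by
        have := Nat.choose_succ_right_eq (2*j+2*m+3) (2*j+1)
        rw [show 2*j+1+1 = 2*j+2 by ring, show 2*j+2*m+3 - (2*j+1) = 2*m+2 by omega] at this
        exact_mod_cast this
      have h2 : ((Nat.choose (2*j+2*m+3) (2*j+3) : ℕ) : ℝ) * (2*(j:ℝ)+3)
          = (Nat.choose (2*j+2*m+3) (2*j+2) : ℝ) * (2*(m:ℝ)+1) := by
        have := Nat.choose_succ_right_eq (2*j+2*m+3) (2*j+2)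
        rw [show 2*j+2+1 = 2*j+3 by ring, show 2*j+2*m+3 - (2*j+2) = 2*m+1 by omega] at this
        exact_mod_cast this
      rw [P3, P1, P2]
      have hZ : ((Nat.choose (2*j+2*m+3) (2*j+3) : ℕ) : ℝ)
          = (Nat.choose (2*j+2*m+3) (2*j+2) : ℝ) * (2*(m:ℝ)+1) / (2*(j:ℝ)+3) := by
        rw [eq_div_iff (by positivity : (2*(j:ℝ)+3) ≠ 0)]; linarith [h2]
      have hY : ((Nat.choose (2*j+2*m+3) (2*j+2) : ℕ) : ℝ)
          = (Nat.choose (2*j+2*m+3) (2*j+1) : ℝ) * (2*(m:ℝ)+2) / (2*(j:ℝ)+2) := by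
        rw [eq_div_iff (by positivity : (2*(j:ℝ)+2) ≠ 0)]; linarith [h1]
      rw [hZ, hY]
      have d1 : ((m:ℝ)+1) ≠ 0 := by positivity
      have d2 : (2*(j:ℝ)+2*m+4) ≠ 0 := by positivity
      have d3 : (2*(j:ℝ)+2*m+3) ≠ 0 := by positivity
      have d4 : (2*(j:ℝ)+2*m+5) ≠ 0 := by positivity
      have d5 : ((j:ℝ)+m+2) ≠ 0 := by positivity
      have d6 : (2*(j:ℝ)+2) ≠ 0 := by positivity
      have d7 : (2*(j:ℝ)+3) ≠ 0 := by positivity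
      field_simp
      ring

lemma cCoef_zero (n : ℕ) (hn : 1 ≤ n) : cCoef n 0 = 0 := by
  rw [cCoef, if_neg (by omega)]; simp

lemma icc_to_range (n : ℕ) (g : ℕ → ℝ) (hg : g 0 = 0) :
    ∑ i ∈ Finset.Icc 1 n, g i = ∑ i ∈ Finset.range (n+1), g i := by
  induction n with
  | zero => simp [hg]
  | succ n ih =>
    rw [Finset.sum_Icc_succ_top (by omega), ih]
    exact (Finset.sum_range_succ g (n+1)).symm

lemma sum_v_ones (n : ℕ) :
    ∑ i ∈ Finset.range (n+1), vCoef n i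
      = ∑ i ∈ Finset.range n, 2*(Nat.choose (2*n-1) (2*i+1) : ℝ) := by
  have h := sum_shift n (fun _ => (1:ℝ))
  simpa using h

lemma sum_c_ones (n : ℕ) :
    ∑ i ∈ Finset.range (n+1), 2*(Nat.choose (2*n-1) (2*i+1) : ℝ)
      = ∑ i ∈ Finset.range n, 2*(Nat.choose (2*n-1) (2*i+1) : ℝ) := by
  have h := sum_drop n (fun _ => (1:ℝ))
  simpa using h

lemma sum_odd_choose' (n : ℕ) (hn : 1 ≤ n) :
    ∑ i ∈ Finset.range n, 2*(Nat.choose (2*n-1) (2*i+1) : ℝ) = 2^(2*n-1) := by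
  obtain ⟨k, rfl⟩ : ∃ k, n = k+1 := ⟨n-1, by omega⟩
  rw [show 2*(k+1)-1 = 2*k+1 by omega]
  exact sum_odd_choose k

lemma sumA (n : ℕ) (hn : 1 ≤ n) :
    ∑ i ∈ Finset.Icc 1 n, cCoef n i / 2^(2*n+1) = 3/(8*(n:ℝ)*(2*(n:ℝ)+1)) := by
  have h2P : (2:ℝ)^(2*n+1) ≠ 0 := by positivity
  rw [icc_to_range n _ (by simp [cCoef_zero n hn])]
  have step : ∑ i ∈ Finset.range (n+1), cCoef n i / 2^(2*n+1)
      = (∑ i ∈ Finset.range (n+1),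
          (2*(3/(8*(n:ℝ)*(2*(n:ℝ)+1)))*(Nat.choose (2*n+1) (2*i+1) : ℝ)
            + (3/(8*(n:ℝ)*(2*(n:ℝ)-1)))*(vCoef n i - 2*(Nat.choose (2*n-1) (2*i+1) : ℝ))))
          / 2^(2*n+1) := by
    rw [Finset.sum_div]
    exact Finset.sum_congr rfl fun i hi =>
      by rw [key n i hn (Nat.lt_succ_iff.mp (Finset.mem_range.mp hi))]
  rw [step, Finset.sum_add_distrib]
  have hA : ∑ i ∈ Finset.range (n+1),
      2*(3/(8*(n:ℝ)*(2*(n:ℝ)+1)))*(Nat.choose (2*n+1) (2*i+1) : ℝ)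
      = (3/(8*(n:ℝ)*(2*(n:ℝ)+1))) * 2^(2*n+1) := by
    rw [← sum_odd_choose n, Finset.mul_sum]
    exact Finset.sum_congr rfl fun i _ => by ring
  have hB : ∑ i ∈ Finset.range (n+1),
      (3/(8*(n:ℝ)*(2*(n:ℝ)-1)))*(vCoef n i - 2*(Nat.choose (2*n-1) (2*i+1) : ℝ)) = 0 := by
    rw [← Finset.mul_sum, Finset.sum_sub_distrib, sum_v_ones, sum_c_ones, sub_self, mul_zero]
  rw [hA, hB, add_zero, mul_div_assoc, div_self h2P, mul_one]

lemma sumB (n : ℕ) (hn : 1 ≤ n) :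
    ∑ i ∈ Finset.Icc 1 n, (cCoef n i / 2^(2*n+1)) * (4*(i:ℝ) - 2*(n:ℝ) + 1)
      = 3/(8*(n:ℝ)*(2*(n:ℝ)-1)) := by
  have h2P : (2:ℝ)^(2*n+1) ≠ 0 := by positivity
  rw [icc_to_range n _ (by simp [cCoef_zero n hn])]
  have step : ∑ i ∈ Finset.range (n+1), (cCoef n i / 2^(2*n+1)) * (4*(i:ℝ) - 2*(n:ℝ) + 1)
      = (∑ i ∈ Finset.range (n+1),
          (2*(3/(8*(n:ℝ)*(2*(n:ℝ)+1)))*(Nat.choose (2*n+1) (2*i+1) : ℝ)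
            + (3/(8*(n:ℝ)*(2*(n:ℝ)-1)))*(vCoef n i - 2*(Nat.choose (2*n-1) (2*i+1) : ℝ)))
          * (4*(i:ℝ) - 2*(n:ℝ) + 1)) / 2^(2*n+1) := by
    rw [Finset.sum_div]
    refine Finset.sum_congr rfl fun i hi => ?_
    rw [key n i hn (Nat.lt_succ_iff.mp (Finset.mem_range.mp hi))]
    ring
  rw [step]
  have split : ∑ i ∈ Finset.range (n+1),
      (2*(3/(8*(n:ℝ)*(2*(n:ℝ)+1)))*(Nat.choose (2*n+1) (2*i+1) : ℝ)
        + (3/(8*(n:ℝ)*(2*(n:ℝ)-1)))*(vCoef n i - 2*(Nat.choose (2*n-1) (2*i+1) : ℝ)))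
      * (4*(i:ℝ) - 2*(n:ℝ) + 1)
      = (3/(8*(n:ℝ)*(2*(n:ℝ)+1))) * (∑ i ∈ Finset.range (n+1),
          2*(Nat.choose (2*n+1) (2*i+1) : ℝ) * (4*(i:ℝ) - 2*(n:ℝ) + 1))
        + (3/(8*(n:ℝ)*(2*(n:ℝ)-1))) * (∑ i ∈ Finset.range (n+1),
          (vCoef n i - 2*(Nat.choose (2*n-1) (2*i+1) : ℝ)) * (4*(i:ℝ) - 2*(n:ℝ) + 1)) := by
    rw [Finset.mul_sum, Finset.mul_sum, ← Finset.sum_add_distrib]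
    exact Finset.sum_congr rfl fun i _ => by ring
  rw [split]
  -- the C₊-weighted sum vanishes
  have hA : ∑ i ∈ Finset.range (n+1),
      2*(Nat.choose (2*n+1) (2*i+1) : ℝ) * (4*(i:ℝ) - 2*(n:ℝ) + 1) = 0 := by
    have hmul : ∀ i : ℕ, (2*(i:ℝ)+1) * (Nat.choose (2*n+1) (2*i+1) : ℝ)
        = (2*(n:ℝ)+1) * (Nat.choose (2*n) (2*i) : ℝ) := by
      intro i
      have h' : (2*n+1) * Nat.choose (2*n) (2*i) = Nat.choose (2*n+1) (2*i+1) * (2*i+1) := by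
        simpa [Nat.succ_eq_add_one] using Nat.add_one_mul_choose_eq (2*n) (2*i)
      have h'' := congrArg (Nat.cast : ℕ → ℝ) h'
      push_cast at h''
      linarith
    have per : ∀ i ∈ Finset.range (n+1),
        2*(Nat.choose (2*n+1) (2*i+1) : ℝ) * (4*(i:ℝ) - 2*(n:ℝ) + 1)
          = ((2*(n:ℝ)+1)*2) * (2*(Nat.choose (2*n) (2*i) : ℝ))
            - (2*(n:ℝ)+1) * (2*(Nat.choose (2*n+1) (2*i+1) : ℝ)) := by
      intro i _
      linear_combination 4 * hmul i
    rw [Finset.sum_congr rfl per, Finset.sum_sub_distrib]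
    have t1 : ∑ i ∈ Finset.range (n+1), ((2*(n:ℝ)+1)*2) * (2*(Nat.choose (2*n) (2*i) : ℝ))
        = ((2*(n:ℝ)+1)*2) * 2^(2*n) := by
      rw [← Finset.mul_sum, sum_even_choose n hn]
    have t2 : ∑ i ∈ Finset.range (n+1), (2*(n:ℝ)+1) * (2*(Nat.choose (2*n+1) (2*i+1) : ℝ))
        = (2*(n:ℝ)+1) * 2^(2*n+1) := by
      rw [← Finset.mul_sum, sum_odd_choose n]
    rw [t1, t2, pow_succ]
    ring
  -- the C₋-weighted sum gives 2^(2n+1)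
  have hB : ∑ i ∈ Finset.range (n+1),
      (vCoef n i - 2*(Nat.choose (2*n-1) (2*i+1) : ℝ)) * (4*(i:ℝ) - 2*(n:ℝ) + 1)
      = 2^(2*n+1) := by
    have e1 : ∑ i ∈ Finset.range (n+1), vCoef n i * (4*(i:ℝ) - 2*(n:ℝ) + 1)
        = ∑ i ∈ Finset.range n,
            2*(Nat.choose (2*n-1) (2*i+1) : ℝ) * (4*((i:ℝ)+1) - 2*(n:ℝ) + 1) := by
      have h := sum_shift n (fun i => (4*(i:ℝ) - 2*(n:ℝ) + 1))
      rw [h]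
      exact Finset.sum_congr rfl fun i _ => by push_cast; ring
    have e2 : ∑ i ∈ Finset.range (n+1),
        2*(Nat.choose (2*n-1) (2*i+1) : ℝ) * (4*(i:ℝ) - 2*(n:ℝ) + 1)
        = ∑ i ∈ Finset.range n,
            2*(Nat.choose (2*n-1) (2*i+1) : ℝ) * (4*(i:ℝ) - 2*(n:ℝ) + 1) :=
      sum_drop n _
    have e3 : ∑ i ∈ Finset.range (n+1),
        (vCoef n i - 2*(Nat.choose (2*n-1) (2*i+1) : ℝ)) * (4*(i:ℝ) - 2*(n:ℝ) + 1)
        = ∑ i ∈ Finset.range n, 4 * (2*(Nat.choose (2*n-1) (2*i+1) : ℝ)) := by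
      have : ∀ i ∈ Finset.range (n+1),
          (vCoef n i - 2*(Nat.choose (2*n-1) (2*i+1) : ℝ)) * (4*(i:ℝ) - 2*(n:ℝ) + 1)
            = vCoef n i * (4*(i:ℝ) - 2*(n:ℝ) + 1)
              - 2*(Nat.choose (2*n-1) (2*i+1) : ℝ) * (4*(i:ℝ) - 2*(n:ℝ) + 1) :=
        fun i _ => by ring
      rw [Finset.sum_congr rfl this, Finset.sum_sub_distrib, e1, e2, ← Finset.sum_sub_distrib]
      exact Finset.sum_congr rfl fun i _ => by ring
    rw [e3, ← Finset.mul_sum, sum_odd_choose' n hn,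
      show 2*n+1 = (2*n-1)+2 by omega, pow_add]
    ring
  rw [hA, hB, mul_zero, zero_add, mul_div_assoc, div_self h2P, mul_one]

lemma master (n : ℕ) (hn : 1 ≤ n) (x q : ℝ) :
    ∑ i ∈ Finset.range (n+1), cCoef n i * (x^(2*i+1) * q^(2*(n-i)))
      = ((q+x)^(2*n+1) - (q-x)^(2*n+1)) * (3/(8*(n:ℝ)*(2*(n:ℝ)+1)))
        + ((q-x)^(2*n)*(q+x) - (q-x)*(q+x)^(2*n)) * (3/(8*(n:ℝ)*(2*(n:ℝ)-1))) := by
  obtain ⟨k, rfl⟩ : ∃ k, n = k+1 := ⟨n-1, by omega⟩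
  rw [odd_expand (k+1) x q]
  have hB : (q-x)^(2*(k+1))*(q+x) - (q-x)*(q+x)^(2*(k+1))
      = ∑ i ∈ Finset.range (k+1), 2*(Nat.choose (2*(k+1)-1) (2*i+1) : ℝ) *
          (x^(2*(i+1)+1) * q^(2*((k+1)-(i+1))) - x^(2*i+1) * q^(2*((k+1)-i))) := by
    have hstep : (q-x)^(2*(k+1))*(q+x) - (q-x)*(q+x)^(2*(k+1))
        = -((q-x)*(q+x)*((q+x)^(2*k+1) - (q-x)^(2*k+1))) := by ring
    rw [hstep, odd_expand k x q, Finset.mul_sum, ← Finset.sum_neg_distrib]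
    refine Finset.sum_congr rfl fun i hi => ?_
    have hik : i ≤ k := Nat.lt_succ_iff.mp (Finset.mem_range.mp hi)
    rw [show 2*(k+1)-1 = 2*k+1 by omega, show (k+1)-(i+1) = k-i by omega,
      show 2*((k+1)-i) = 2*(k-i)+2 by omega]
    ring
  have h2 : ∑ i ∈ Finset.range (k+1), 2*(Nat.choose (2*(k+1)-1) (2*i+1) : ℝ) *
        (x^(2*(i+1)+1) * q^(2*((k+1)-(i+1))) - x^(2*i+1) * q^(2*((k+1)-i)))
      = (∑ i ∈ Finset.range (k+1+1), vCoef (k+1) i * (x^(2*i+1) * q^(2*((k+1)-i))))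
        - ∑ i ∈ Finset.range (k+1+1),
            2*(Nat.choose (2*(k+1)-1) (2*i+1) : ℝ) * (x^(2*i+1) * q^(2*((k+1)-i))) := by
    rw [sum_shift (k+1) (fun i => x^(2*i+1) * q^(2*((k+1)-i))),
      sum_drop (k+1) (fun i => x^(2*i+1) * q^(2*((k+1)-i))), ← Finset.sum_sub_distrib]
    exact Finset.sum_congr rfl fun i _ => by ring
  rw [hB, h2, sub_mul, Finset.sum_mul, Finset.sum_mul, Finset.sum_mul,
    ← Finset.sum_sub_distrib, ← Finset.sum_add_distrib]
  refine Finset.sum_congr rfl fun i hi => ?_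
  rw [key (k+1) i hn (Nat.lt_succ_iff.mp (Finset.mem_range.mp hi))]
  ring

/-- For every `n ≥ 1` and all reals `s, r`, the density written in phase variables
satisfies
`Σ_{i=1}^n (c_i/2^{2n+1})(s−r)^{2i+1}(s+r)^{2(n−i)}
  = (s^{2n+1} − r^{2n+1}) Σ c_i/2^{2n+1}
    + (r^{2n} s − r s^{2n}) Σ (c_i/2^{2n+1})(4i−2n+1)`. -/
theorem density_phase_variable_identity (n : ℕ) (hn : 1 ≤ n) (s r : ℝ) :
    ∑ i ∈ Finset.Icc 1 n,
        (cCoef n i / 2 ^ (2 * n + 1)) * (s - r) ^ (2 * i + 1) * (s + r) ^ (2 * (n - i))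
    = (s ^ (2 * n + 1) - r ^ (2 * n + 1)) *
        (∑ i ∈ Finset.Icc 1 n, cCoef n i / 2 ^ (2 * n + 1))
      + (r ^ (2 * n) * s - r * s ^ (2 * n)) *
        (∑ i ∈ Finset.Icc 1 n,
          (cCoef n i / 2 ^ (2 * n + 1)) * (4 * (i : ℝ) - 2 * (n : ℝ) + 1)) := by
  obtain ⟨x, q, rfl, rfl⟩ : ∃ x q : ℝ, s = q + x ∧ r = q - x :=
    ⟨(s-r)/2, (s+r)/2, by ring, by ring⟩
  rw [sumA n hn, sumB n hn]
  have hL : ∑ i ∈ Finset.Icc 1 n,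
      (cCoef n i / 2^(2*n+1)) * ((q+x) - (q-x))^(2*i+1) * ((q+x) + (q-x))^(2*(n-i))
      = ∑ i ∈ Finset.range (n+1), cCoef n i * (x^(2*i+1) * q^(2*(n-i))) := by
    rw [icc_to_range n _ (by simp [cCoef_zero n hn])]
    refine Finset.sum_congr rfl fun i hi => ?_
    have hik : i ≤ n := Nat.lt_succ_iff.mp (Finset.mem_range.mp hi)
    have hp : (2:ℝ)^(2*i+1) * 2^(2*(n-i)) = 2^(2*n+1) := by
      rw [← pow_add]; congr 1; omega
    have h2P : (2:ℝ)^(2*n+1) ≠ 0 := by positivity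
    rw [show (q+x) - (q-x) = 2*x by ring, show (q+x) + (q-x) = 2*q by ring,
      mul_pow, mul_pow]
    field_simp
    linear_combination (cCoef n i * x^(2*i+1) * q^(2*(n-i))) * hp
  rw [hL, master n hn x q]
end

section
/- For every integer n ≥ 1, the density f and flux h satisfy the conservation-law compatibility conditions for the KP soliton modulation system: for all a > 0 and all q ∈ ℝ, ∂h/∂a = 2q ∂f/∂a + (1/3) ∂f/∂q and ∂h/∂q = (4/3)a ∂f/∂a + 2q ∂f/∂q. Consequently, if a(y,t) > 0 and q(y,t) are differentiable solutions of the modulation system, then ∂_t f(a,q) + ∂_y h(a,q) = 0. -/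
/-- Partial derivative of `fDen` in `a`. -/
noncomputable def Fa (n : ℕ) (a q : ℝ) : ℝ :=
  ∑ i ∈ Finset.Icc 1 n, cCoef n i * (((i:ℝ) + 1/2) * (a ^ (i-1) * Real.sqrt a)) * q ^ (2 * (n - i))

/-- Partial derivative of `fDen` in `q`. -/
noncomputable def Fq (n : ℕ) (a q : ℝ) : ℝ :=
  ∑ i ∈ Finset.Icc 1 n, cCoef n i * (a ^ i * Real.sqrt a) * ((2 * (n - i) : ℕ) * q ^ (2 * (n - i) - 1))

/-- Partial derivative of `hFlux` in `a`. -/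
noncomputable def Ha (n : ℕ) (a q : ℝ) : ℝ :=
  ∑ i ∈ Finset.Icc 1 n, dCoef n i * (((i:ℝ) + 1/2) * (a ^ (i-1) * Real.sqrt a)) * q ^ (2 * (n - i) + 1)

/-- Partial derivative of `hFlux` in `q`. -/
noncomputable def Hq (n : ℕ) (a q : ℝ) : ℝ :=
  ∑ i ∈ Finset.Icc 1 n, dCoef n i * (a ^ i * Real.sqrt a) * ((2 * (n - i) + 1 : ℕ) * q ^ (2 * (n - i)))

lemma coefC (n i : ℕ) (h1 : 1 ≤ i) (h2 : i ≤ n) :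
    ((i:ℝ) - 1) * (2*(i:ℝ) + 1) * cCoef n i
      = ((n:ℝ) - (i:ℝ) + 1) * (2*((n:ℝ)-(i:ℝ)) + 1) * cCoef n (i-1) := by
  rcases eq_or_lt_of_le h1 with h|h
  · subst h
    rw [(by omega : (1:ℕ) - 1 = 0), cCoef_zero n (by omega)]
    norm_num
  · have h2i : 2 ≤ i := h
    have hi1 : (1:ℝ) < (i:ℝ) := by exact_mod_cast h
    have hcast : ((i - 1 : ℕ) : ℝ) = (i:ℝ) - 1 := by
      push_cast [Nat.cast_sub (by omega : 1 ≤ i)]; ring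
    rcases eq_or_lt_of_le h2 with he|hlt
    · subst he
      rw [cCoef, if_pos rfl, cCoef, if_neg (by omega)]
      have hch : (Nat.choose (2*i) (2*(i-1)+1) : ℝ) = 2 * i := by
        rw [(by omega : 2*(i-1)+1 = 2*i - 1)]
        rw [Nat.choose_symm (by omega), Nat.choose_one_right]
        push_cast; ring
      rw [hcast, hch]
      have e1 : 2*(i:ℝ) + 1 ≠ 0 := by positivity
      have e2 : 2*(i:ℝ) - 1 ≠ 0 := by intro hc; linarith
      have e3 : (i:ℝ) - ((i:ℝ)-1) = 1 := by ring
      rw [e3]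
      have e4 : (i:ℝ) ≠ 0 := by intro hc; linarith
      field_simp
      ring
    · have hkey : (Nat.choose (2*n) (2*i+1) * ((2*i+1)*(2*i)) : ℕ)
          = Nat.choose (2*n) (2*i-1) * ((2*n-2*i+1)*(2*n-2*i)) := by
        have hA := Nat.choose_succ_right_eq (2*n) (2*i)
        have hB := Nat.choose_succ_right_eq (2*n) (2*i-1)
        rw [(by omega : 2*i-1+1 = 2*i), (by omega : 2*n - (2*i-1) = 2*n-2*i+1)] at hB
        calc Nat.choose (2*n) (2*i+1) * ((2*i+1)*(2*i))
            = (Nat.choose (2*n) (2*i+1) * (2*i+1))*(2*i) := by ring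
          _ = (Nat.choose (2*n) (2*i) * (2*n - 2*i))*(2*i) := by rw [hA]
          _ = (Nat.choose (2*n) (2*i) * (2*i))*(2*n-2*i) := by ring
          _ = (Nat.choose (2*n) (2*i-1) * (2*n-2*i+1))*(2*n-2*i) := by rw [hB]
          _ = _ := by ring
      have hkeyR : (Nat.choose (2*n) (2*i+1) : ℝ) * ((2*(i:ℝ)+1)*(2*(i:ℝ)))
          = (Nat.choose (2*n) (2*i-1) : ℝ) * ((2*(n:ℝ)-2*(i:ℝ)+1)*(2*(n:ℝ)-2*(i:ℝ))) := by
        have := congrArg (Nat.cast : ℕ → ℝ) hkey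
        push_cast [Nat.cast_sub (by omega : 2*i ≤ 2*n), Nat.cast_sub (by omega : 1 ≤ 2*i)] at this
        convert this using 2 <;> ring
      have eq1 : (i:ℝ)*(2*(i:ℝ)+1)*(Nat.choose (2*n) (2*i+1) : ℝ)
          = ((n:ℝ)-(i:ℝ))*(2*((n:ℝ)-(i:ℝ))+1)*(Nat.choose (2*n) (2*i-1) : ℝ) := by
        linear_combination (1/2) * hkeyR
      rw [cCoef, if_neg (by omega), cCoef, if_neg (by omega)]
      rw [hcast, (by omega : 2*(i-1)+1 = 2*i-1)]
      have hiln : (i:ℝ) < (n:ℝ) := by exact_mod_cast hlt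
      have e1 : (n:ℝ) - (i:ℝ) ≠ 0 := by intro hc; linarith
      have e2 : (n:ℝ) - ((i:ℝ)-1) ≠ 0 := by intro hc; linarith
      have e3 : 2*(n:ℝ) ≠ 0 := by intro hc; linarith
      have e4 : 2*(n:ℝ) - 1 ≠ 0 := by intro hc; linarith
      have e5 : (n:ℝ) ≠ 0 := by intro hc; linarith
      field_simp
      linear_combination (((i:ℝ)-1)*((n:ℝ)-(i:ℝ)+1)) * eq1

lemma hden (n i : ℕ) (h2 : i ≤ n) : 2*(i:ℝ) - 2*(n:ℝ) - 1 ≠ 0 := by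
  have : (i:ℝ) ≤ (n:ℝ) := by exact_mod_cast h2
  intro hc; linarith

lemma dCoef_mul (n i : ℕ) (hd : 2*(i:ℝ) - 2*(n:ℝ) - 1 ≠ 0) :
    dCoef n i * (3*(2*(i:ℝ)-2*(n:ℝ)-1))
      = (2*(3*(2*(i:ℝ)-2*(n:ℝ)-1)) - 4*((i:ℝ)-1)) * cCoef n i := by
  rw [dCoef]
  have h3 : (3:ℝ)*(2*(i:ℝ)-2*(n:ℝ)-1) ≠ 0 := by intro hc; apply hd; linarith
  have hd' : 2*((i:ℝ)-(n:ℝ))-1 ≠ 0 := by intro hc; apply hd; linarith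
  field_simp

lemma coefC' (n i : ℕ) (h1 : 1 ≤ i) (h2 : i ≤ n) :
    dCoef n i * ((i:ℝ) + 1/2)
      = 2 * cCoef n i * ((i:ℝ) + 1/2)
        + (2/3) * ((n:ℝ) - (i:ℝ) + 1) * cCoef n (i-1) := by
  have hd := hden n i h2
  have h3 : (3:ℝ)*(2*(i:ℝ)-2*(n:ℝ)-1) ≠ 0 := by intro hc; apply hd; linarith
  apply mul_right_cancel₀ h3
  linear_combination ((i:ℝ)+1/2) * dCoef_mul n i hd + (-2 : ℝ) * coefC n i h1 h2

lemma coefD (n i : ℕ) (h1 : 1 ≤ i) (h2 : i ≤ n) :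
    dCoef n i * (2*((n:ℝ)-(i:ℝ))+1)
      = (4/3)*((i:ℝ)+1/2)*cCoef n i + 4*((n:ℝ)-(i:ℝ))*cCoef n i := by
  have hd := hden n i h2
  have h3 : (3:ℝ)*(2*(i:ℝ)-2*(n:ℝ)-1) ≠ 0 := by intro hc; apply hd; linarith
  apply mul_right_cancel₀ h3
  linear_combination (2*((n:ℝ)-(i:ℝ))+1) * dCoef_mul n i hd

lemma sum_Icc_one (n : ℕ) (g : ℕ → ℝ) :
    ∑ i ∈ Finset.Icc 1 n, g i = ∑ k ∈ Finset.range n, g (k+1) := by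
  rw [← Finset.Ico_add_one_right_eq_Icc, Finset.sum_Ico_eq_sum_range]
  simp [Nat.add_comm]

lemma shift_sum (n : ℕ) (ψ : ℕ → ℝ) (h0 : ψ 0 = 0) (hn : ψ n = 0) :
    ∑ k ∈ Finset.range n, ψ (k+1) = ∑ k ∈ Finset.range n, ψ k := by
  have h := Finset.sum_range_succ' ψ n
  rw [Finset.sum_range_succ] at h
  linarith

lemma identB (n : ℕ) (hn : 1 ≤ n) (a q : ℝ) :
    Hq n a q = (4/3)*a*Fa n a q + 2*q*Fq n a q := by
  rw [Hq, Fa, Fq, Finset.mul_sum, Finset.mul_sum, ← Finset.sum_add_distrib]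
  apply Finset.sum_congr rfl
  intro i hi
  simp only [Finset.mem_Icc] at hi
  have ha : a ^ i = a ^ (i-1) * a := by
    rw [← pow_succ]; congr 1; omega
  rcases eq_or_lt_of_le hi.2 with he|hlt
  · subst he
    simp only [Nat.sub_self, Nat.mul_zero, pow_zero, Nat.cast_zero, Nat.cast_one,
      Nat.zero_add, mul_one, zero_mul, mul_zero, add_zero, Nat.cast_ofNat]
    have hD := coefD i i hi.1 le_rfl
    simp only [sub_self, mul_zero, zero_mul, add_zero, zero_add, mul_one] at hD
    rw [ha]
    linear_combination (a^(i-1) * Real.sqrt a * a) * hD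
  · have hc2 : ((2*(n-i) : ℕ) : ℝ) = 2*((n:ℝ)-(i:ℝ)) := by
      push_cast [Nat.cast_sub hi.2]; ring
    have hc3 : ((2*(n-i)+1 : ℕ) : ℝ) = 2*((n:ℝ)-(i:ℝ))+1 := by
      push_cast [Nat.cast_sub hi.2]; ring
    obtain ⟨k, hk⟩ : ∃ k, 2*(n-i) = k+1 := ⟨2*(n-i)-1, by omega⟩
    rw [hc2, hc3, ha, hk]
    simp only [Nat.add_sub_cancel, pow_succ]
    linear_combination (a^(i-1) * a * Real.sqrt a * q^k * q) * coefD n i hi.1 hi.2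

lemma identA (n : ℕ) (hn : 1 ≤ n) (a q : ℝ) :
    Ha n a q = 2*q*Fa n a q + (1/3)*Fq n a q := by
  set ψ : ℕ → ℝ := fun k =>
    (2/3)*((n:ℝ)-(k:ℝ))*cCoef n k*(a^k*Real.sqrt a)*q^(2*(n-k)-1) with hψdef
  have hFq : (1/3)*Fq n a q = ∑ k ∈ Finset.range n, ψ k := by
    rw [Fq, Finset.mul_sum, sum_Icc_one]
    rw [← shift_sum n ψ (by simp [hψdef, cCoef_zero n hn]) (by simp [hψdef])]
    apply Finset.sum_congr rfl
    intro k hk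
    simp only [Finset.mem_range] at hk
    have h2 : k+1 ≤ n := hk
    have hc2 : ((2*(n-(k+1)) : ℕ) : ℝ) = 2*((n:ℝ)-((k:ℝ)+1)) := by
      push_cast [Nat.cast_sub h2]; ring
    simp only [hψdef]
    rw [hc2]
    push_cast
    ring
  rw [hFq, Ha, sum_Icc_one, Fa, sum_Icc_one, Finset.mul_sum, ← Finset.sum_add_distrib]
  apply Finset.sum_congr rfl
  intro k hk
  simp only [Finset.mem_range] at hk
  simp only [hψdef, Nat.add_sub_cancel]
  have he : 2*(n-k)-1 = 2*(n-(k+1))+1 := by omega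
  rw [he, pow_succ]
  have hC := coefC' n (k+1) (by omega) (by omega)
  simp only [Nat.add_sub_cancel] at hC
  push_cast at hC ⊢
  linear_combination (a^k * Real.sqrt a * q^(2*(n-(k+1))) * q) * hC

lemma hasDerivAt_powSqrt (i : ℕ) (hi : 1 ≤ i) (x : ℝ) (hx : 0 < x) :
    HasDerivAt (fun a => a ^ i * Real.sqrt a)
      (((i:ℝ) + 1/2) * (x ^ (i-1) * Real.sqrt x)) x := by
  have hs : HasDerivAt Real.sqrt (1 / (2 * Real.sqrt x)) x := Real.hasDerivAt_sqrt hx.ne'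
  have hp : HasDerivAt (fun a : ℝ => a ^ i) ((i:ℝ) * x ^ (i-1)) x := hasDerivAt_pow i x
  have := hp.mul hs
  refine this.congr_deriv ?_
  have hsx : Real.sqrt x ≠ 0 := by positivity
  have hxx : Real.sqrt x * Real.sqrt x = x := Real.mul_self_sqrt hx.le
  obtain ⟨j, rfl⟩ : ∃ j, i = j + 1 := ⟨i - 1, by omega⟩
  simp only [Nat.add_sub_cancel]
  field_simp
  ring_nf
  nlinarith [hxx, pow_nonneg hx.le j]

lemma key_f (n : ℕ) (p r : ℝ → ℝ) (p' r' t : ℝ)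
    (hp : HasDerivAt p p' t) (hr : HasDerivAt r r' t) (hpos : 0 < p t) :
    HasDerivAt (fun s => fDen n (p s) (r s))
      (Fa n (p t) (r t) * p' + Fq n (p t) (r t) * r') t := by
  have hterm : ∀ i ∈ Finset.Icc 1 n,
      HasDerivAt (fun s => cCoef n i * ((p s) ^ i * Real.sqrt (p s)) * (r s) ^ (2 * (n - i)))
        (cCoef n i * (((i:ℝ) + 1/2) * ((p t) ^ (i-1) * Real.sqrt (p t))) * (r t) ^ (2 * (n - i)) * p'
          + cCoef n i * ((p t) ^ i * Real.sqrt (p t)) * ((2 * (n - i) : ℕ) * (r t) ^ (2 * (n - i) - 1)) * r') t := by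
    intro i hi
    simp only [Finset.mem_Icc] at hi
    have h1 : HasDerivAt (fun s => (p s) ^ i * Real.sqrt (p s))
        ((((i:ℝ) + 1/2) * ((p t) ^ (i-1) * Real.sqrt (p t))) * p') t :=
      (hasDerivAt_powSqrt i hi.1 (p t) hpos).comp t hp
    have h2 : HasDerivAt (fun s => (r s) ^ (2 * (n - i)))
        (((2 * (n - i) : ℕ) * (r t) ^ (2 * (n - i) - 1)) * r') t :=
      (hasDerivAt_pow (2 * (n - i)) (r t)).comp t hr
    have := (h1.const_mul (cCoef n i)).mul h2
    refine this.congr_deriv ?_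
    ring
  have hsum := HasDerivAt.fun_sum hterm
  refine hsum.congr_deriv ?_
  rw [Fa, Fq, Finset.sum_mul, Finset.sum_mul, ← Finset.sum_add_distrib]

lemma key_h (n : ℕ) (p r : ℝ → ℝ) (p' r' t : ℝ)
    (hp : HasDerivAt p p' t) (hr : HasDerivAt r r' t) (hpos : 0 < p t) :
    HasDerivAt (fun s => hFlux n (p s) (r s))
      (Ha n (p t) (r t) * p' + Hq n (p t) (r t) * r') t := by
  have hterm : ∀ i ∈ Finset.Icc 1 n,
      HasDerivAt (fun s => dCoef n i * ((p s) ^ i * Real.sqrt (p s)) * (r s) ^ (2 * (n - i) + 1))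
        (dCoef n i * (((i:ℝ) + 1/2) * ((p t) ^ (i-1) * Real.sqrt (p t))) * (r t) ^ (2 * (n - i) + 1) * p'
          + dCoef n i * ((p t) ^ i * Real.sqrt (p t)) * ((2 * (n - i) + 1 : ℕ) * (r t) ^ (2 * (n - i))) * r') t := by
    intro i hi
    simp only [Finset.mem_Icc] at hi
    have h1 : HasDerivAt (fun s => (p s) ^ i * Real.sqrt (p s))
        ((((i:ℝ) + 1/2) * ((p t) ^ (i-1) * Real.sqrt (p t))) * p') t :=
      (hasDerivAt_powSqrt i hi.1 (p t) hpos).comp t hp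
    have h2 : HasDerivAt (fun s => (r s) ^ (2 * (n - i) + 1))
        (((2 * (n - i) + 1 : ℕ) * (r t) ^ (2 * (n - i))) * r') t := by
      have := (hasDerivAt_pow (2 * (n - i) + 1) (r t)).comp t hr
      simpa [Function.comp_def] using this
    have := (h1.const_mul (dCoef n i)).mul h2
    refine this.congr_deriv ?_
    ring
  have hsum := HasDerivAt.fun_sum hterm
  refine hsum.congr_deriv ?_
  rw [Ha, Hq, Finset.sum_mul, Finset.sum_mul, ← Finset.sum_add_distrib]

/-- For every `n ≥ 1`, the density `f` and flux `h` satisfy the compatibility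
conditions `h_a = 2q f_a + (1/3) f_q` and `h_q = (4/3)a f_a + 2q f_q` for all
`a > 0`, `q ∈ ℝ`; consequently, for any differentiable solution `(a,q)` of the
KP soliton modulation system with `a > 0`, `∂_t f(a,q) + ∂_y h(a,q) = 0`. -/
theorem first_family_is_conservation_law (n : ℕ) (hn : 1 ≤ n) :
    (∀ a q : ℝ, 0 < a →
      (deriv (fun a' => hFlux n a' q) a
          = 2 * q * deriv (fun a' => fDen n a' q) a
            + (1 / 3) * deriv (fun q' => fDen n a q') q)
      ∧ (deriv (fun q' => hFlux n a q') q
          = (4 / 3) * a * deriv (fun a' => fDen n a' q) a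
            + 2 * q * deriv (fun q' => fDen n a q') q))
    ∧ (∀ (a q aY aT qY qT : ℝ → ℝ → ℝ),
        (∀ y t, 0 < a y t) →
        (∀ y t, HasDerivAt (fun y' => a y' t) (aY y t) y) →
        (∀ y t, HasDerivAt (fun t' => a y t') (aT y t) t) →
        (∀ y t, HasDerivAt (fun y' => q y' t) (qY y t) y) →
        (∀ y t, HasDerivAt (fun t' => q y t') (qT y t) t) →
        (∀ y t, aT y t + 2 * q y t * aY y t + (4 / 3) * a y t * qY y t = 0) →
        (∀ y t, qT y t + (1 / 3) * aY y t + 2 * q y t * qY y t = 0) →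
        ∀ y t, deriv (fun t' => fDen n (a y t') (q y t')) t
              + deriv (fun y' => hFlux n (a y' t) (q y' t)) y = 0) := by
  constructor
  · intro a q ha
    have d1 : deriv (fun a' => fDen n a' q) a = Fa n a q := by
      have h := (key_f n (fun s => s) (fun _ => q) 1 0 a
        (hasDerivAt_id a) (hasDerivAt_const a q) ha).deriv
      simpa using h
    have d2 : deriv (fun q' => fDen n a q') q = Fq n a q := by
      have h := (key_f n (fun _ => a) (fun s => s) 0 1 q
        (hasDerivAt_const q a) (hasDerivAt_id q) ha).deriv
      simpa using h
    have d3 : deriv (fun a' => hFlux n a' q) a = Ha n a q := by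
      have h := (key_h n (fun s => s) (fun _ => q) 1 0 a
        (hasDerivAt_id a) (hasDerivAt_const a q) ha).deriv
      simpa using h
    have d4 : deriv (fun q' => hFlux n a q') q = Hq n a q := by
      have h := (key_h n (fun _ => a) (fun s => s) 0 1 q
        (hasDerivAt_const q a) (hasDerivAt_id q) ha).deriv
      simpa using h
    rw [d1, d2, d3, d4]
    exact ⟨identA n hn a q, identB n hn a q⟩
  · intro a q aY aT qY qT hpos haY haT hqY hqT pde1 pde2 y t
    have hf := (key_f n (fun t' => a y t') (fun t' => q y t') (aT y t) (qT y t) t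
      (haT y t) (hqT y t) (hpos y t)).deriv
    have hh := (key_h n (fun y' => a y' t) (fun y' => q y' t) (aY y t) (qY y t) y
      (haY y t) (hqY y t) (hpos y t)).deriv
    rw [hf, hh]
    have hA := identA n hn (a y t) (q y t)
    have hB := identB n hn (a y t) (q y t)
    have e1 := pde1 y t
    have e2 := pde2 y t
    linear_combination (aY y t) * hA + (qY y t) * hB
      + Fa n (a y t) (q y t) * e1 + Fq n (a y t) (q y t) * e2
end

section
/- For all reals k₁ < k₂ < k₃ and any two distinct indices i, j ∈ {1,2,3}, the Y soliton parameters satisfy the ordinary Rankine–Hugoniot jump condition for the conservation of waves equation q_t + (a/3 + q²)_y = 0 with the vertex velocity s_y: s_y (q_i − q_j) = (a_i/3 + q_i²) − (a_j/3 + q_j²). -/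
/-- For all `k₁ < k₂ < k₃` and any two distinct legs `i ≠ j` of the Y soliton
(with parameters `q₁=(k₁+k₂)/2, q₂=(k₁+k₃)/2, q₃=(k₂+k₃)/2`,
`a₁=(k₂−k₁)²/4, a₂=(k₃−k₁)²/4, a₃=(k₃−k₂)²/4`), the ordinary Rankine–Hugoniot
jump condition for the conservation of waves equation `q_t + (a/3 + q²)_y = 0`
holds with vertex velocity `s_y = (2/3)(k₁+k₂+k₃)`:
`s_y (q_i − q_j) = (a_i/3 + q_i²) − (a_j/3 + q_j²)`. -/
theorem y_soliton_conservation_of_waves_jump (k₁ k₂ k₃ : ℝ)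
    (h12 : k₁ < k₂) (h23 : k₂ < k₃)
    (qv av : Fin 3 → ℝ)
    (hqv : qv = ![(k₁ + k₂) / 2, (k₁ + k₃) / 2, (k₂ + k₃) / 2])
    (hav : av = ![(k₂ - k₁) ^ 2 / 4, (k₃ - k₁) ^ 2 / 4, (k₃ - k₂) ^ 2 / 4])
    (i j : Fin 3) (hij : i ≠ j) :
    (2 / 3) * (k₁ + k₂ + k₃) * (qv i - qv j)
      = (av i / 3 + (qv i) ^ 2) - (av j / 3 + (qv j) ^ 2) := by
  subst hqv hav
  fin_cases i <;> fin_cases j <;> simp_all <;> ring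
end

section
/- For all reals k₁ < k₂ < k₃ and every index j ∈ {1,2,3}, the Y soliton vertex moves along each of its three soliton lines: s_x + q_j s_y = a_j/3 + q_j². In particular, s_x = a₂/3 + q₂² − q₂ s_y. -/
/-- For all `k₁ < k₂ < k₃` and every leg `j` of the Y soliton
(with parameters `q₁=(k₁+k₂)/2, q₂=(k₁+k₃)/2, q₃=(k₂+k₃)/2`,
`a₁=(k₂−k₁)²/4, a₂=(k₃−k₁)²/4, a₃=(k₃−k₂)²/4`, indexed by `Fin 3` so that leg
`j+1` has index `j`), the vertex with velocity
`(s_x, s_y) = (−(1/3)(k₁k₂+k₁k₃+k₂k₃), (2/3)(k₁+k₂+k₃))` moves along each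
soliton line: `s_x + q_j s_y = a_j/3 + q_j²`.  In particular
`s_x = a₂/3 + q₂² − q₂ s_y`. -/
theorem y_soliton_vertex_on_each_line (k₁ k₂ k₃ : ℝ)
    (h12 : k₁ < k₂) (h23 : k₂ < k₃)
    (qv av : Fin 3 → ℝ)
    (hqv : qv = ![(k₁ + k₂) / 2, (k₁ + k₃) / 2, (k₂ + k₃) / 2])
    (hav : av = ![(k₂ - k₁) ^ 2 / 4, (k₃ - k₁) ^ 2 / 4, (k₃ - k₂) ^ 2 / 4]) :
    (∀ j : Fin 3,
      -(1 / 3) * (k₁ * k₂ + k₁ * k₃ + k₂ * k₃) + qv j * ((2 / 3) * (k₁ + k₂ + k₃))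
        = av j / 3 + (qv j) ^ 2)
    ∧ -(1 / 3) * (k₁ * k₂ + k₁ * k₃ + k₂ * k₃)
        = av 1 / 3 + (qv 1) ^ 2 - qv 1 * ((2 / 3) * (k₁ + k₂ + k₃)) := by
  subst hqv hav
  constructor
  · intro j
    fin_cases j <;> simp [Matrix.cons_val_zero, Matrix.cons_val_one] <;> ring
  · simp [Matrix.cons_val_one] ; ring
end

section
/- There is no nontrivial shock connecting exactly two soliton states: if a₁ > 0, a₂ > 0 and q₁, q₂, s ∈ ℝ satisfy the three jump conditions s(q₂ − q₁) = (a₂/3 + q₂²) − (a₁/3 + q₁²), s(a₂^{3/2} − a₁^{3/2}) = 2q₂ a₂^{3/2} − 2q₁ a₁^{3/2}, and s(q₂ a₂^{3/2} − q₁ a₁^{3/2}) = ((2/15) a₂^{5/2} + 2q₂² a₂^{3/2}) − ((2/15) a₁^{5/2} + 2q₁² a₁^{3/2}), then a₁ = a₂ and q₁ = q₂. -/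
/-- No nontrivial shock connects exactly two soliton states: if `a₁, a₂ > 0` and
`q₁, q₂, s` satisfy the Rankine–Hugoniot jump conditions for the conservation of
waves equation `q_t + (a/3 + q²)_y = 0`, the wave action law
`(a^{3/2})_t + (2q a^{3/2})_y = 0`, and the `y`-momentum law
`(q a^{3/2})_t + ((2/15)a^{5/2} + 2q² a^{3/2})_y = 0`, then `a₁ = a₂` and
`q₁ = q₂`.  (Here `a^{3/2} = a·√a` and `a^{5/2} = a²·√a`.) -/
theorem no_two_soliton_shock (a₁ a₂ q₁ q₂ s : ℝ) (ha₁ : 0 < a₁) (ha₂ : 0 < a₂)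
    (h1 : s * (q₂ - q₁) = (a₂ / 3 + q₂ ^ 2) - (a₁ / 3 + q₁ ^ 2))
    (h2 : s * (a₂ * Real.sqrt a₂ - a₁ * Real.sqrt a₁)
        = 2 * q₂ * (a₂ * Real.sqrt a₂) - 2 * q₁ * (a₁ * Real.sqrt a₁))
    (h3 : s * (q₂ * (a₂ * Real.sqrt a₂) - q₁ * (a₁ * Real.sqrt a₁))
        = ((2 / 15) * (a₂ ^ 2 * Real.sqrt a₂) + 2 * q₂ ^ 2 * (a₂ * Real.sqrt a₂))
          - ((2 / 15) * (a₁ ^ 2 * Real.sqrt a₁) + 2 * q₁ ^ 2 * (a₁ * Real.sqrt a₁))) :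
    a₁ = a₂ ∧ q₁ = q₂ := by
  set A := Real.sqrt a₁ with hAdef
  set B := Real.sqrt a₂ with hBdef
  have hA : 0 < A := Real.sqrt_pos.mpr ha₁
  have hB : 0 < B := Real.sqrt_pos.mpr ha₂
  have hA2 : A ^ 2 = a₁ := Real.sq_sqrt ha₁.le
  have hB2 : B ^ 2 = a₂ := Real.sq_sqrt ha₂.le
  rw [← hA2, ← hB2] at h1 h2 h3
  set v₁ := q₁ - s / 2 with hv₁
  set v₂ := q₂ - s / 2 with hv₂
  set m := v₁ * A ^ 3 with hm
  have H2 : v₂ * B ^ 3 = m := by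
    rw [hm, hv₁, hv₂]; linear_combination (-(1:ℝ)/2) * h2
  have H1 : v₂ ^ 2 - v₁ ^ 2 = -(B ^ 2 - A ^ 2) / 3 := by
    rw [hv₁, hv₂]; linear_combination -h1
  have H3 : (2/15) * (B ^ 5 - A ^ 5) + 2 * (v₂ ^ 2 * B ^ 3 - v₁ ^ 2 * A ^ 3) = 0 := by
    have hH2 : v₂ * B ^ 3 - v₁ * A ^ 3 = 0 := by
      rw [hm] at H2; linear_combination H2
    rw [hv₁, hv₂] at hH2 ⊢
    linear_combination -h3 - s * hH2
  have E1 : m ^ 2 * (B ^ 6 - A ^ 6) = (B ^ 2 - A ^ 2) * A ^ 6 * B ^ 6 / 3 := by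
    linear_combination (-(A ^ 6 * B ^ 6)) * H1 + (A ^ 6 * (v₂ * B ^ 3 + m)) * H2
      + (B ^ 6 * (m + v₁ * A ^ 3)) * hm
  have E2 : 15 * m ^ 2 * (B ^ 3 - A ^ 3) = (B ^ 5 - A ^ 5) * A ^ 3 * B ^ 3 := by
    linear_combination (-(15:ℝ)/2 * A ^ 3 * B ^ 3) * H3
      + (15 * A ^ 3 * (v₂ * B ^ 3 + m)) * H2 + (15 * B ^ 3 * (m + v₁ * A ^ 3)) * hm
  have KEY : (B ^ 5 - A ^ 5) * A ^ 3 * B ^ 3 * (B ^ 6 - A ^ 6)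
      - 5 * (B ^ 3 - A ^ 3) * (B ^ 2 - A ^ 2) * A ^ 6 * B ^ 6 = 0 := by
    linear_combination (15 * (B ^ 3 - A ^ 3)) * E1 - (B ^ 6 - A ^ 6) * E2
  have hfac : A ^ 3 * B ^ 3 * ((B - A) ^ 4 * ((B ^ 2 + A * B + A ^ 2)
      * (B ^ 5 + 3 * A * B ^ 4 + 6 * A ^ 2 * B ^ 3 + 6 * A ^ 3 * B ^ 2
        + 3 * A ^ 4 * B + A ^ 5))) = 0 := by
    linear_combination KEY
  have hBA : B = A := by
    by_contra hne
    have hne' : B - A ≠ 0 := sub_ne_zero.mpr hne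
    have h4 : 0 < (B - A) ^ 4 := by positivity
    have hp1 : 0 < A ^ 3 * B ^ 3 := by positivity
    have hp2 : 0 < (B ^ 2 + A * B + A ^ 2)
      * (B ^ 5 + 3 * A * B ^ 4 + 6 * A ^ 2 * B ^ 3 + 6 * A ^ 3 * B ^ 2
        + 3 * A ^ 4 * B + A ^ 5) := by positivity
    have : 0 < A ^ 3 * B ^ 3 * ((B - A) ^ 4 * ((B ^ 2 + A * B + A ^ 2)
      * (B ^ 5 + 3 * A * B ^ 4 + 6 * A ^ 2 * B ^ 3 + 6 * A ^ 3 * B ^ 2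
        + 3 * A ^ 4 * B + A ^ 5))) := by positivity
    exact absurd hfac this.ne'
  have ha : a₁ = a₂ := by rw [← hA2, ← hB2, hBA]
  refine ⟨ha, ?_⟩
  have hq : v₂ * B ^ 3 = v₁ * B ^ 3 := by rw [H2, hm, hBA]
  have hv : v₂ = v₁ := by
    have hB3 : (B:ℝ) ^ 3 ≠ 0 := by positivity
    exact mul_right_cancel₀ hB3 hq
  rw [hv₁, hv₂] at hv
  linarith
end

section
/- Let U = I × J be an open rectangle with I ⊆ (0,∞) and J ⊆ (0,∞) nondegenerate open intervals. There is no continuously differentiable function ψ : U → ℝ that is nowhere zero on U and satisfies both 4a (∂ψ/∂a)² = (∂ψ/∂q)² and ψ + 2q (∂ψ/∂q) = 0 at every point (a,q) ∈ U. -/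
/-- Let `U = I × J` be an open rectangle with `I = (p₁,p₂) ⊆ (0,∞)` and
`J = (r₁,r₂) ⊆ (0,∞)` nondegenerate open intervals.  There is no continuously
differentiable function `ψ : U → ℝ` that is nowhere zero on `U` and satisfies
both `4a (∂ψ/∂a)² = (∂ψ/∂q)²` and `ψ + 2q (∂ψ/∂q) = 0` at every `(a,q) ∈ U`. -/
theorem no_common_singular_psi (p₁ p₂ r₁ r₂ : ℝ)
    (hp : p₁ < p₂) (hr : r₁ < r₂) (hp0 : 0 < p₁) (hr0 : 0 < r₁) :
    ¬ ∃ ψ : ℝ × ℝ → ℝ,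
      ContDiffOn ℝ 1 ψ (Set.Ioo p₁ p₂ ×ˢ Set.Ioo r₁ r₂) ∧
      (∀ z ∈ Set.Ioo p₁ p₂ ×ˢ Set.Ioo r₁ r₂, ψ z ≠ 0) ∧
      (∀ a ∈ Set.Ioo p₁ p₂, ∀ q ∈ Set.Ioo r₁ r₂,
        4 * a * (deriv (fun a' => ψ (a', q)) a) ^ 2
            = (deriv (fun q' => ψ (a, q')) q) ^ 2
        ∧ ψ (a, q) + 2 * q * deriv (fun q' => ψ (a, q')) q = 0) := by
  rintro ⟨ψ, hC, hne, heq⟩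
  -- differentiability of ψ at interior points
  have hopen : IsOpen (Set.Ioo p₁ p₂ ×ˢ Set.Ioo r₁ r₂) := isOpen_Ioo.prod isOpen_Ioo
  have hdiff : ∀ z ∈ Set.Ioo p₁ p₂ ×ˢ Set.Ioo r₁ r₂, DifferentiableAt ℝ ψ z := by
    intro z hz
    exact (hC.differentiableOn one_ne_zero).differentiableAt (hopen.mem_nhds hz)
  -- the q-slice has derivative -ψ/(2q)
  have hslice : ∀ a' ∈ Set.Ioo p₁ p₂, ∀ q ∈ Set.Ioo r₁ r₂,
      HasDerivAt (fun q' => ψ (a', q')) (-ψ (a', q) / (2 * q)) q := by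
    intro a' ha' q hq
    have hq0 : (0:ℝ) < q := lt_trans hr0 hq.1
    have hd : DifferentiableAt ℝ (fun q' => ψ (a', q')) q := by
      have h1 : DifferentiableAt ℝ (fun q' : ℝ => ((a', q') : ℝ × ℝ)) q :=
        DifferentiableAt.prodMk (differentiableAt_const _) differentiableAt_id
      exact (hdiff (a', q) ⟨ha', hq⟩).comp q h1
    have h0 := (heq a' ha' q hq).2
    have hd' : deriv (fun q' => ψ (a', q')) q = -ψ (a', q) / (2 * q) := by
      field_simp
      linarith
    rw [← hd']
    exact hd.hasDerivAt
  -- the function q ↦ ψ(a,q) * √q is constant on J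
  set q₀ : ℝ := (2 * r₁ + r₂) / 3 with hq₀def
  set q₁ : ℝ := (r₁ + 2 * r₂) / 3 with hq₁def
  have hq₀ : q₀ ∈ Set.Ioo r₁ r₂ := ⟨by rw [hq₀def]; linarith, by rw [hq₀def]; linarith⟩
  have hq₁ : q₁ ∈ Set.Ioo r₁ r₂ := ⟨by rw [hq₁def]; linarith, by rw [hq₁def]; linarith⟩
  have hq01 : q₀ < q₁ := by rw [hq₀def, hq₁def]; linarith
  have hq₀pos : (0:ℝ) < q₀ := lt_trans hr0 hq₀.1
  have hq₁pos : (0:ℝ) < q₁ := lt_trans hr0 hq₁.1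
  have hconst : ∀ a' ∈ Set.Ioo p₁ p₂,
      ψ (a', q₁) * Real.sqrt q₁ = ψ (a', q₀) * Real.sqrt q₀ := by
    intro a' ha'
    have hderiv : ∀ q ∈ Set.Ioo r₁ r₂,
        HasDerivAt (fun q' => ψ (a', q') * Real.sqrt q') 0 q := by
      intro q hq
      have hqpos : (0:ℝ) < q := lt_trans hr0 hq.1
      have hs := Real.hasDerivAt_sqrt hqpos.ne'
      have hm := (hslice a' ha' q hq).mul hs
      have hsq : Real.sqrt q ^ 2 = q := Real.sq_sqrt hqpos.le
      have hsne : Real.sqrt q ≠ 0 := Real.sqrt_ne_zero'.mpr hqpos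
      have hz : -ψ (a', q) / (2 * q) * Real.sqrt q + ψ (a', q) * (1 / (2 * Real.sqrt q)) = 0 := by
        field_simp
        linear_combination (-ψ (a', q)) * hsq
      rw [hz] at hm
      exact hm
    have hsub : Set.Icc q₀ q₁ ⊆ Set.Ioo r₁ r₂ := fun x hx =>
      ⟨lt_of_lt_of_le hq₀.1 hx.1, lt_of_le_of_lt hx.2 hq₁.2⟩
    have hcont : ContinuousOn (fun q' => ψ (a', q') * Real.sqrt q') (Set.Icc q₀ q₁) :=
      fun x hx => ((hderiv x (hsub hx)).continuousAt).continuousWithinAt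
    obtain ⟨c, _, hc'⟩ := exists_hasDerivAt_eq_slope
      (fun q' => ψ (a', q') * Real.sqrt q') (fun _ => (0:ℝ)) hq01 hcont
      (fun x hx => hderiv x (hsub (Set.mem_Icc_of_Ioo hx)))
    have hne01 : q₁ - q₀ ≠ 0 := by linarith
    field_simp at hc'
    linarith [hc']
  -- choose a point a and compare derivatives in a
  set a : ℝ := (p₁ + p₂) / 2 with hadef
  have haI : a ∈ Set.Ioo p₁ p₂ := ⟨by rw [hadef]; linarith, by rw [hadef]; linarith⟩
  have ha0 : (0:ℝ) < a := lt_trans hp0 haI.1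
  have hfeq : (fun a' => ψ (a', q₁) * Real.sqrt q₁)
      =ᶠ[nhds a] (fun a' => ψ (a', q₀) * Real.sqrt q₀) := by
    filter_upwards [isOpen_Ioo.mem_nhds haI] with x hx using hconst x hx
  have hde : deriv (fun a' => ψ (a', q₁)) a * Real.sqrt q₁
      = deriv (fun a' => ψ (a', q₀)) a * Real.sqrt q₀ := by
    have h := hfeq.deriv_eq
    rwa [deriv_mul_const_field, deriv_mul_const_field] at h
  -- abbreviations
  set A₀ : ℝ := deriv (fun a' => ψ (a', q₀)) a with hA₀def
  set A₁ : ℝ := deriv (fun a' => ψ (a', q₁)) a with hA₁def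
  set P₀ : ℝ := ψ (a, q₀) with hP₀def
  set P₁ : ℝ := ψ (a, q₁) with hP₁def
  have hs₀ : Real.sqrt q₀ ^ 2 = q₀ := Real.sq_sqrt hq₀pos.le
  have hs₁ : Real.sqrt q₁ ^ 2 = q₁ := Real.sq_sqrt hq₁pos.le
  -- the modulation equations at (a,q₀) and (a,q₁)
  have e0 : 16 * a * q₀ ^ 2 * A₀ ^ 2 = P₀ ^ 2 := by
    have hd := (hslice a haI q₀ hq₀).deriv
    have h := (heq a haI q₀ hq₀).1
    rw [hd] at h
    have hq0ne : q₀ ≠ 0 := hq₀pos.ne'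
    field_simp at h
    linarith
  have e1 : 16 * a * q₁ ^ 2 * A₁ ^ 2 = P₁ ^ 2 := by
    have hd := (hslice a haI q₁ hq₁).deriv
    have h := (heq a haI q₁ hq₁).1
    rw [hd] at h
    have hq1ne : q₁ ≠ 0 := hq₁pos.ne'
    field_simp at h
    linarith
  -- squared relations
  have h1' : A₁ ^ 2 * q₁ = A₀ ^ 2 * q₀ := by
    have h := congrArg (fun x => x ^ 2) hde
    simp only [mul_pow] at h
    rw [hs₀, hs₁] at h
    exact h
  have h2' : P₁ ^ 2 * q₁ = P₀ ^ 2 * q₀ := by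
    have h := congrArg (fun x => x ^ 2) (hconst a haI)
    simp only [mul_pow] at h
    rw [hs₀, hs₁] at h
    exact h
  have key1 : 16 * a * q₁ ^ 2 * (A₀ ^ 2 * q₀) = P₀ ^ 2 * q₀ := by
    linear_combination q₁ * e1 - 16 * a * q₁ ^ 2 * h1' + h2'
  have key2 : 16 * a * q₀ ^ 2 * (A₀ ^ 2 * q₀) = P₀ ^ 2 * q₀ := by
    linear_combination q₀ * e0
  have hA2 : A₀ ^ 2 = 0 := by
    have h3 : 16 * a * (q₁ ^ 2 - q₀ ^ 2) * (A₀ ^ 2 * q₀) = 0 := by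
      linear_combination key1 - key2
    by_contra h
    have hA2pos : 0 < A₀ ^ 2 := lt_of_le_of_ne (sq_nonneg _) (Ne.symm h)
    have hq2 : 0 < q₁ ^ 2 - q₀ ^ 2 := by nlinarith
    have hpos : 0 < 16 * a * (q₁ ^ 2 - q₀ ^ 2) * (A₀ ^ 2 * q₀) :=
      mul_pos (mul_pos (by linarith) hq2) (mul_pos hA2pos hq₀pos)
    linarith
  have hP2 : P₀ ^ 2 = 0 := by
    linear_combination -e0 + 16 * a * q₀ ^ 2 * hA2
  have : P₀ = 0 := by
    have := sq_eq_zero_iff.mp hP2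
    exact this
  exact hne (a, q₀) ⟨haI, hq₀⟩ this
end

section
/- Riemann invariant diagonalization of the modulation system: let a, q : ℝ² → ℝ be differentiable functions of (y,t) with a > 0 everywhere, satisfying the KP soliton modulation system at every point. Then the Riemann invariants R₊ = q + √a and R₋ = q − √a satisfy ∂_t R₊ + (2q + (2/3)√a) ∂_y R₊ = 0 and ∂_t R₋ + (2q − (2/3)√a) ∂_y R₋ = 0 at every point; i.e., R_± are transported at the characteristic velocities V_± = (4/3)R_± + (2/3)R_∓. -/
/-- Riemann invariant diagonalization: if `a > 0` and `q` are differentiable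
solutions of the KP soliton modulation system `a_t + 2q a_y + (4/3)a q_y = 0`,
`q_t + (1/3)a_y + 2q q_y = 0`, then the Riemann invariants `R± = q ± √a`
satisfy `∂_t R± + (2q ± (2/3)√a) ∂_y R± = 0` at every point. -/
theorem riemann_invariant_diagonalization (a q aY aT qY qT : ℝ → ℝ → ℝ)
    (hpos : ∀ y t, 0 < a y t)
    (haY : ∀ y t, HasDerivAt (fun y' => a y' t) (aY y t) y)
    (haT : ∀ y t, HasDerivAt (fun t' => a y t') (aT y t) t)
    (hqY : ∀ y t, HasDerivAt (fun y' => q y' t) (qY y t) y)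
    (hqT : ∀ y t, HasDerivAt (fun t' => q y t') (qT y t) t)
    (heq1 : ∀ y t, aT y t + 2 * q y t * aY y t + (4 / 3) * a y t * qY y t = 0)
    (heq2 : ∀ y t, qT y t + (1 / 3) * aY y t + 2 * q y t * qY y t = 0) :
    ∀ y t,
      (deriv (fun t' => q y t' + Real.sqrt (a y t')) t
          + (2 * q y t + (2 / 3) * Real.sqrt (a y t)) *
              deriv (fun y' => q y' t + Real.sqrt (a y' t)) y = 0)
      ∧ (deriv (fun t' => q y t' - Real.sqrt (a y t')) t
          + (2 * q y t - (2 / 3) * Real.sqrt (a y t)) *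
              deriv (fun y' => q y' t - Real.sqrt (a y' t)) y = 0) := by
  intro y t
  have ha := (hpos y t).ne'
  set s := Real.sqrt (a y t) with hs
  have hs0 : 0 < s := Real.sqrt_pos.mpr (hpos y t)
  have hs2 : s * s = a y t := Real.mul_self_sqrt (hpos y t).le
  have hT : HasDerivAt (fun t' => Real.sqrt (a y t'))
      (aT y t / (2 * s)) t := (haT y t).sqrt ha
  have hY : HasDerivAt (fun y' => Real.sqrt (a y' t))
      (aY y t / (2 * s)) y := (haY y t).sqrt ha
  have dTplus : deriv (fun t' => q y t' + Real.sqrt (a y t')) t = _ := ((hqT y t).add hT).deriv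
  have dYplus : deriv (fun y' => q y' t + Real.sqrt (a y' t)) y = _ := ((hqY y t).add hY).deriv
  have dTminus : deriv (fun t' => q y t' - Real.sqrt (a y t')) t = _ := ((hqT y t).sub hT).deriv
  have dYminus : deriv (fun y' => q y' t - Real.sqrt (a y' t)) y = _ := ((hqY y t).sub hY).deriv
  rw [dTplus, dYplus, dTminus, dYminus]
  have e1 := heq1 y t
  have e2 := heq2 y t
  rw [← hs2] at e1
  constructor <;> field_simp <;> nlinarith [hs0, e1, e2]
end

section
/- The partial-soliton simple wave solves the modulation system: let a_n > 0, q_n ∈ ℝ, set q_* = q_n + √(a_n), and define on the region D = {(y,t) : t > 0 and (2q_n − (2/3)√(a_n)) t < y < 2 q_* t} the functions a(y,t) = (9/64)(2q_* − y/t)² and q(y,t) = q_* − (3/8)(2q_* − y/t). Then a > 0 on D and (a,q) satisfies the KP soliton modulation system at every point of D. -/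
/-- The partial-soliton simple wave solves the KP soliton modulation system:
let `a_n > 0`, `q_* = q_n + √a_n`, and on the region
`D = {(y,t) : t > 0, (2q_n − (2/3)√a_n) t < y < 2q_* t}` define
`a(y,t) = (9/64)(2q_* − y/t)²` and `q(y,t) = q_* − (3/8)(2q_* − y/t)`.
Then `a > 0` on `D` and `(a,q)` satisfies `a_t + 2q a_y + (4/3)a q_y = 0` and
`q_t + (1/3)a_y + 2q q_y = 0` at every point of `D`. -/
theorem partial_soliton_simple_wave (an qn : ℝ) (han : 0 < an) (y t : ℝ)
    (ht : 0 < t)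
    (hy1 : (2 * qn - (2 / 3) * Real.sqrt an) * t < y)
    (hy2 : y < 2 * (qn + Real.sqrt an) * t) :
    (0 < (9 / 64) * (2 * (qn + Real.sqrt an) - y / t) ^ 2)
    ∧ (deriv (fun t' => (9 / 64) * (2 * (qn + Real.sqrt an) - y / t') ^ 2) t
        + 2 * ((qn + Real.sqrt an) - (3 / 8) * (2 * (qn + Real.sqrt an) - y / t)) *
            deriv (fun y' => (9 / 64) * (2 * (qn + Real.sqrt an) - y' / t) ^ 2) y
        + (4 / 3) * ((9 / 64) * (2 * (qn + Real.sqrt an) - y / t) ^ 2) *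
            deriv (fun y' => (qn + Real.sqrt an)
              - (3 / 8) * (2 * (qn + Real.sqrt an) - y' / t)) y = 0)
    ∧ (deriv (fun t' => (qn + Real.sqrt an)
          - (3 / 8) * (2 * (qn + Real.sqrt an) - y / t')) t
        + (1 / 3) * deriv (fun y' => (9 / 64) * (2 * (qn + Real.sqrt an) - y' / t) ^ 2) y
        + 2 * ((qn + Real.sqrt an) - (3 / 8) * (2 * (qn + Real.sqrt an) - y / t)) *
            deriv (fun y' => (qn + Real.sqrt an)
              - (3 / 8) * (2 * (qn + Real.sqrt an) - y' / t)) y = 0) := by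
  set Q : ℝ := qn + Real.sqrt an with hQ
  have htne : t ≠ 0 := ht.ne'
  have hs : 0 < 2 * Q - y / t := by
    rw [sub_pos, div_lt_iff₀ ht]
    linarith [hy2]
  -- derivative in t of (2Q - y/t')
  have hT : HasDerivAt (fun t' : ℝ => 2 * Q - y / t')
      (0 - (0 * t - y * 1) / t ^ 2) t :=
    (hasDerivAt_const t (2 * Q)).sub
      (((hasDerivAt_const t y).div (hasDerivAt_id t) htne))
  have hT' : HasDerivAt (fun t' : ℝ => 2 * Q - y / t') (y / t ^ 2) t := by
    convert hT using 1; field_simp; ring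
  -- derivative in y of (2Q - y'/t)
  have hY : HasDerivAt (fun y' : ℝ => 2 * Q - y' / t) (0 - 1 / t) y :=
    (hasDerivAt_const y (2 * Q)).sub ((hasDerivAt_id y).div_const t)
  have hY' : HasDerivAt (fun y' : ℝ => 2 * Q - y' / t) (-(1 / t)) y := by
    convert hY using 1; ring
  -- a derivatives
  have haT : HasDerivAt (fun t' : ℝ => (9 / 64 : ℝ) * (2 * Q - y / t') ^ 2)
      ((9 / 64) * (2 * ((2 * Q - y / t) ^ 1) * (y / t ^ 2))) t := by
    exact ((hT'.pow 2)).const_mul (9 / 64 : ℝ)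
  have haY : HasDerivAt (fun y' : ℝ => (9 / 64 : ℝ) * (2 * Q - y' / t) ^ 2)
      ((9 / 64) * (2 * ((2 * Q - y / t) ^ 1) * (-(1 / t)))) y := by
    exact ((hY'.pow 2)).const_mul (9 / 64 : ℝ)
  -- q derivatives
  have hqT : HasDerivAt (fun t' : ℝ => Q - (3 / 8 : ℝ) * (2 * Q - y / t'))
      (0 - (3 / 8) * (y / t ^ 2)) t :=
    (hasDerivAt_const t Q).sub (hT'.const_mul (3 / 8 : ℝ))
  have hqY : HasDerivAt (fun y' : ℝ => Q - (3 / 8 : ℝ) * (2 * Q - y' / t))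
      (0 - (3 / 8) * (-(1 / t))) y :=
    (hasDerivAt_const y Q).sub (hY'.const_mul (3 / 8 : ℝ))
  refine ⟨by positivity, ?_, ?_⟩
  · rw [haT.deriv, haY.deriv, hqY.deriv]
    have hyt : y / t = 2 * Q - (2 * Q - y / t) := by ring
    field_simp
    ring
  · rw [hqT.deriv, haY.deriv, hqY.deriv]
    field_simp
    ring
end

section
/- Two-exponential tau function yields the line soliton: let ε > 0 and k₋ < k₊ be reals, and define θ_±(x,y,t) = (1/(√12 ε))(k_± x + (k_±²/2) y − (k_±³/3) t). Then for all (x,y,t), 12 ε² ∂²/∂x² [ log( e^{θ₋(x,y,t)} + e^{θ₊(x,y,t)} ) ] = a·sech²( √(a/12)·(x + q y − c t)/ε ), where a = (k₊ − k₋)²/4, q = (k₊ + k₋)/2, and c = a/3 + q². -/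
lemma hd_logcosh (s C a b : ℝ) (x : ℝ) :
    HasDerivAt (fun x => s*x + C + Real.log (Real.cosh (a*x+b)))
      (s + a * Real.tanh (a*x+b)) x := by
  have hlin : HasDerivAt (fun x : ℝ => a*x+b) a x := by
    simpa using ((hasDerivAt_id x).const_mul a).add_const b
  have hc : HasDerivAt (fun x => Real.cosh (a*x+b)) (Real.sinh (a*x+b) * a) x := by
    exact (Real.hasDerivAt_cosh (a*x+b)).comp x hlin
  have hlog := hc.log (Real.cosh_pos (a*x+b)).ne'
  have hs : HasDerivAt (fun x : ℝ => s*x + C) s x := by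
    simpa using ((hasDerivAt_id x).const_mul s).add_const C
  have := hs.add hlog
  refine this.congr_deriv ?_
  rw [Real.tanh_eq_sinh_div_cosh]; ring

lemma hd_tanh (s a b : ℝ) (x : ℝ) :
    HasDerivAt (fun x => s + a * Real.tanh (a*x+b))
      (a^2 / (Real.cosh (a*x+b))^2) x := by
  have hlin : HasDerivAt (fun x : ℝ => a*x+b) a x := by
    simpa using ((hasDerivAt_id x).const_mul a).add_const b
  have hsinh : HasDerivAt (fun x => Real.sinh (a*x+b)) (Real.cosh (a*x+b) * a) x := by
    exact (Real.hasDerivAt_sinh (a*x+b)).comp x hlin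
  have hcosh : HasDerivAt (fun x => Real.cosh (a*x+b)) (Real.sinh (a*x+b) * a) x := by
    exact (Real.hasDerivAt_cosh (a*x+b)).comp x hlin
  have hdiv := hsinh.div hcosh (Real.cosh_pos (a*x+b)).ne'
  have htanh : HasDerivAt (fun x => Real.tanh (a*x+b))
      ((Real.cosh (a*x+b) * a * Real.cosh (a*x+b) - Real.sinh (a*x+b) * (Real.sinh (a*x+b) * a))
        / Real.cosh (a*x+b) ^ 2) x := by
    refine HasDerivAt.congr_of_eventuallyEq hdiv ?_
    filter_upwards with z
    rw [Real.tanh_eq_sinh_div_cosh, Pi.div_apply]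
  have := (htanh.const_mul a).const_add s
  refine this.congr_deriv ?_
  have h2 := Real.cosh_sq_sub_sinh_sq (a*x+b)
  field_simp
  nlinarith [h2]

lemma second_deriv_logcosh (s C a b x : ℝ) :
    iteratedDeriv 2 (fun x => s*x + C + Real.log (Real.cosh (a*x+b))) x
      = a^2 / (Real.cosh (a*x+b))^2 := by
  have hd1 : deriv (fun x => s*x + C + Real.log (Real.cosh (a*x+b)))
      = fun x => s + a * Real.tanh (a*x+b) := by
    funext z; exact (hd_logcosh s C a b z).deriv
  rw [show (2:ℕ) = 1 + 1 from rfl, iteratedDeriv_succ, iteratedDeriv_one, hd1]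
  exact (hd_tanh s a b x).deriv

lemma log_exp_add_exp (u v : ℝ) :
    Real.log (Real.exp u + Real.exp v)
      = (u+v)/2 + Real.log 2 + Real.log (Real.cosh ((v-u)/2)) := by
  have hprod : Real.exp u + Real.exp v
      = Real.exp ((u+v)/2) * (2 * Real.cosh ((v-u)/2)) := by
    rw [Real.cosh_eq,
      show Real.exp ((u+v)/2) * (2 * ((Real.exp ((v-u)/2) + Real.exp (-((v-u)/2)))/2))
        = Real.exp ((u+v)/2) * Real.exp ((v-u)/2)
          + Real.exp ((u+v)/2) * Real.exp (-((v-u)/2)) by ring,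
      ← Real.exp_add, ← Real.exp_add,
      show (u+v)/2 + (v-u)/2 = v by ring,
      show (u+v)/2 + -((v-u)/2) = u by ring, add_comm]
  rw [hprod, Real.log_mul (Real.exp_ne_zero _) (by positivity),
    Real.log_exp, Real.log_mul (by norm_num) (Real.cosh_pos _).ne']
  ring

/-- Two-exponential tau function yields the line soliton: for `ε > 0`,
`k₋ < k₊`, with phases `θ_±(x,y,t) = (1/(√12 ε))(k_± x + (k_±²/2)y − (k_±³/3)t)`,
one has `12 ε² ∂²ₓ log(e^{θ₋} + e^{θ₊}) = a sech²(√(a/12)(x + qy − ct)/ε)` where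
`a = (k₊−k₋)²/4`, `q = (k₊+k₋)/2` and `c = a/3 + q²`. -/
theorem tau_function_line_soliton (ε km kp : ℝ) (hε : 0 < ε) (hk : km < kp)
    (x y t : ℝ) :
    12 * ε ^ 2 *
      iteratedDeriv 2 (fun x' =>
        Real.log
          (Real.exp ((1 / (Real.sqrt 12 * ε)) *
              (km * x' + (km ^ 2 / 2) * y - (km ^ 3 / 3) * t))
            + Real.exp ((1 / (Real.sqrt 12 * ε)) *
              (kp * x' + (kp ^ 2 / 2) * y - (kp ^ 3 / 3) * t)))) x
    = ((kp - km) ^ 2 / 4) *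
        (1 / Real.cosh (Real.sqrt (((kp - km) ^ 2 / 4) / 12) *
          (x + ((kp + km) / 2) * y
            - (((kp - km) ^ 2 / 4) / 3 + ((kp + km) / 2) ^ 2) * t) / ε)) ^ 2 := by
  have hr2 : Real.sqrt 12 ^ 2 = 12 := Real.sq_sqrt (by norm_num)
  have hr0 : (0:ℝ) < Real.sqrt 12 := Real.sqrt_pos.mpr (by norm_num)
  set r := Real.sqrt 12 with hrdef
  have hrne : r ≠ 0 := hr0.ne'
  have hεne : ε ≠ 0 := hε.ne'
  set p : ℝ := 1 / (r * ε) with hp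
  set s : ℝ := p * (km + kp) / 2 with hs
  set C : ℝ := p * ((km^2/2)*y - (km^3/3)*t + ((kp^2/2)*y - (kp^3/3)*t)) / 2
      + Real.log 2 with hC
  set A : ℝ := p * (kp - km) / 2 with hA
  set B : ℝ := p * (((kp^2/2)*y - (kp^3/3)*t) - ((km^2/2)*y - (km^3/3)*t)) / 2 with hB
  have key : (fun x' =>
        Real.log
          (Real.exp (p * (km * x' + (km ^ 2 / 2) * y - (km ^ 3 / 3) * t))
            + Real.exp (p * (kp * x' + (kp ^ 2 / 2) * y - (kp ^ 3 / 3) * t))))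
      = fun x' => s * x' + C + Real.log (Real.cosh (A * x' + B)) := by
    funext x'
    rw [log_exp_add_exp]
    have h1 : (p * (kp * x' + (kp ^ 2 / 2) * y - (kp ^ 3 / 3) * t)
        - p * (km * x' + (km ^ 2 / 2) * y - (km ^ 3 / 3) * t)) / 2 = A * x' + B := by
      rw [hA, hB]; ring
    have h2 : (p * (km * x' + (km ^ 2 / 2) * y - (km ^ 3 / 3) * t)
        + p * (kp * x' + (kp ^ 2 / 2) * y - (kp ^ 3 / 3) * t)) / 2 + Real.log 2
        = s * x' + C := by
      rw [hs, hC]; ring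
    rw [h1]; linarith [h2]
  rw [key, second_deriv_logcosh]
  have hsq : Real.sqrt (((kp - km) ^ 2 / 4) / 12) = (kp - km) / (2 * r) := by
    have h : ((kp - km) / (2 * r)) ^ 2 = ((kp - km) ^ 2 / 4) / 12 := by
      rw [div_pow, mul_pow, hr2]; ring
    rw [← h, Real.sqrt_sq (div_nonneg (by linarith) (by positivity))]
  rw [hsq]
  have harg : A * x + B = (kp - km) / (2 * r) *
      (x + ((kp + km) / 2) * y
        - (((kp - km) ^ 2 / 4) / 3 + ((kp + km) / 2) ^ 2) * t) / ε := by
    rw [hA, hB, hp]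
    field_simp
    ring
  rw [harg]
  have hc := (Real.cosh_pos ((kp - km) / (2 * r) *
      (x + ((kp + km) / 2) * y
        - (((kp - km) ^ 2 / 4) / 3 + ((kp + km) / 2) ^ 2) * t) / ε)).ne'
  have hA2 : 12 * ε ^ 2 * A ^ 2 = (kp - km) ^ 2 / 4 := by
    rw [hA, hp]
    field_simp
    linear_combination (-4 * (kp - km) ^ 2) * hr2
  rw [← hA2]
  ring
end

section
/- Shock-type classification of the Y soliton jumps: for all reals k₁ < k₂ < k₃, the Y soliton parameters satisfy (i) q₂ + √(a₂) = q₃ + √(a₃) = k₃ and 2q₂ − (2/3)√(a₂) < 2q₃ − (2/3)√(a₃), so the jump between legs 2 and 3 conserves the Riemann invariant R₊ = q + √a and is compressive in the slow characteristic family; and (ii) q₁ − √(a₁) = q₂ − √(a₂) = k₁ and 2q₁ + (2/3)√(a₁) < 2q₂ + (2/3)√(a₂), so the jump between legs 1 and 2 conserves the Riemann invariant R₋ = q − √a and is expansive in the fast characteristic family. -/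
/-- Shock-type classification of the Y soliton jumps: for `k₁ < k₂ < k₃`, with
Y soliton parameters `q₁=(k₁+k₂)/2, q₂=(k₁+k₃)/2, q₃=(k₂+k₃)/2`,
`a₁=(k₂−k₁)²/4, a₂=(k₃−k₁)²/4, a₃=(k₃−k₂)²/4`:
(i) `q₂+√a₂ = q₃+√a₃ = k₃` and `2q₂−(2/3)√a₂ < 2q₃−(2/3)√a₃` (the jump between
legs 2 and 3 conserves `R₊ = q+√a` and is compressive in the slow family);
(ii) `q₁−√a₁ = q₂−√a₂ = k₁` and `2q₁+(2/3)√a₁ < 2q₂+(2/3)√a₂` (the jump between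
legs 1 and 2 conserves `R₋ = q−√a` and is expansive in the fast family). -/
theorem y_soliton_shock_classification (k₁ k₂ k₃ : ℝ)
    (h12 : k₁ < k₂) (h23 : k₂ < k₃) :
    ((k₁ + k₃) / 2 + Real.sqrt ((k₃ - k₁) ^ 2 / 4) = k₃
      ∧ (k₂ + k₃) / 2 + Real.sqrt ((k₃ - k₂) ^ 2 / 4) = k₃
      ∧ 2 * ((k₁ + k₃) / 2) - (2 / 3) * Real.sqrt ((k₃ - k₁) ^ 2 / 4)
          < 2 * ((k₂ + k₃) / 2) - (2 / 3) * Real.sqrt ((k₃ - k₂) ^ 2 / 4))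
    ∧ ((k₁ + k₂) / 2 - Real.sqrt ((k₂ - k₁) ^ 2 / 4) = k₁
      ∧ (k₁ + k₃) / 2 - Real.sqrt ((k₃ - k₁) ^ 2 / 4) = k₁
      ∧ 2 * ((k₁ + k₂) / 2) + (2 / 3) * Real.sqrt ((k₂ - k₁) ^ 2 / 4)
          < 2 * ((k₁ + k₃) / 2) + (2 / 3) * Real.sqrt ((k₃ - k₁) ^ 2 / 4)) := by
  have h : ∀ a b : ℝ, a < b → Real.sqrt ((b - a) ^ 2 / 4) = (b - a) / 2 := by
    intro a b hab
    rw [show (b - a) ^ 2 / 4 = ((b - a) / 2) ^ 2 by ring,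
      Real.sqrt_sq (by linarith)]
  rw [h _ _ h12, h _ _ h23, h _ _ (h12.trans h23)]
  refine ⟨⟨by ring, by ring, by linarith⟩, ⟨by ring, by ring, by linarith⟩⟩
end
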